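/- arXiv:2002.03108 — 7 statements merged into one kernel-verified Lean document; each statement's English description precedes it below -/
import Mathlib

section
/- Let G be a cactus graph with k ≥ 2 cycles and let S be a general position set of G of maximum cardinality (a gp-set). Then for every cycle C₀ of G, the number of vertices of C₀ that belong to S is strictly less than 3. -/
open SimpleGraph

/-- A set of vertices is in *general position* if no three distinct vertices of it
lie on a common geodesic. -/
def IsGPSet {V : Type*} (G : SimpleGraph V) (S : Set V) : Prop :=
  ∀ x ∈ S, ∀ y ∈ S, ∀ z ∈ S, x ≠ y → y ≠ z → x ≠ z →
    G.dist x z ≠ G.dist x y + G.dist y z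

/-- The general position number `gp(G)`: the largest cardinality of a general
position set. -/
noncomputable def gpNumber {V : Type*} (G : SimpleGraph V) : ℕ :=
  sSup {n | ∃ S : Set V, IsGPSet G S ∧ S.ncard = n}

/-- A gp-set: a general position set of maximum cardinality. -/
def IsGPMaxSet {V : Type*} (G : SimpleGraph V) (S : Set V) : Prop :=
  IsGPSet G S ∧ S.ncard = gpNumber G

/-- The degree of a vertex, as the cardinality of its neighbourhood. -/
noncomputable def vdeg {V : Type*} (G : SimpleGraph V) (v : V) : ℕ :=
  (G.neighborSet v).ncard

/-- A subgraph of `G` which is a cycle: nonempty, finite, connected and 2-regular. -/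
def IsCycleSubgraph {V : Type*} (G : SimpleGraph V) (C : G.Subgraph) : Prop :=
  C.verts.Nonempty ∧ C.verts.Finite ∧ C.coe.Connected ∧
    ∀ v ∈ C.verts, (C.neighborSet v).ncard = 2

/-- A cactus: a connected graph in which any two distinct cycles are edge-disjoint
(equivalently, each block is a cycle or a cut edge). -/
def IsCactus {V : Type*} (G : SimpleGraph V) : Prop :=
  G.Connected ∧ ∀ C₁ C₂ : G.Subgraph, IsCycleSubgraph G C₁ → IsCycleSubgraph G C₂ →
    C₁ ≠ C₂ → Disjoint C₁.edgeSet C₂.edgeSet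

/-- The number of cycles of `G`. -/
noncomputable def numCycles {V : Type*} (G : SimpleGraph V) : ℕ :=
  {C : G.Subgraph | IsCycleSubgraph G C}.ncard

/-- The number of pendant edges of `G` (edges incident with a vertex of degree 1). -/
noncomputable def numPendantEdges {V : Type*} (G : SimpleGraph V) : ℕ :=
  {e ∈ G.edgeSet | ∃ v ∈ e, vdeg G v = 1}.ncard

/-- `v` is a cut vertex of `G`: `G` is connected but deleting `v` disconnects it. -/
def IsCutVtx {V : Type*} (G : SimpleGraph V) (v : V) : Prop :=
  G.Connected ∧ ¬ (G.induce ({v}ᶜ : Set V)).Connected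

/-- `p` is a cut-path on the cycle `C`: a path running along `C` that contains
all cut vertices of `G` lying on `C`. -/
def IsCutPathOn {V : Type*} (G : SimpleGraph V) (C : G.Subgraph)
    {u v : V} (p : G.Walk u v) : Prop :=
  p.IsPath ∧ (∀ e ∈ p.edges, e ∈ C.edgeSet) ∧
    ∀ w ∈ C.verts, IsCutVtx G w → w ∈ p.support

/-- `D_c` of a cycle `C`: the minimum number of edges of a cut-path between two
distinct cut vertices of `C`. -/
noncomputable def Dc {V : Type*} (G : SimpleGraph V) (C : G.Subgraph) : ℕ :=
  sInf {n | ∃ (u v : V) (p : G.Walk u v), u ≠ v ∧ u ∈ C.verts ∧ v ∈ C.verts ∧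
    IsCutVtx G u ∧ IsCutVtx G v ∧ IsCutPathOn G C p ∧ p.length = n}

/-- A good cycle: an end-block (at most one cut vertex), or a cycle whose `D_c`
is at most `ℓ/2` for even length `ℓ`, resp. at most `⌊ℓ/2⌋ - 1` for odd `ℓ`. -/
def IsGoodCycle {V : Type*} (G : SimpleGraph V) (C : G.Subgraph) : Prop :=
  IsCycleSubgraph G C ∧
    ({v ∈ C.verts | IsCutVtx G v}.ncard ≤ 1 ∨
     (Even C.verts.ncard ∧ Dc G C ≤ C.verts.ncard / 2) ∨
     (Odd C.verts.ncard ∧ Dc G C ≤ C.verts.ncard / 2 - 1))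

/-- A block of a cactus: a cycle or a bridge (cut edge). -/
def IsCactusBlock {V : Type*} (G : SimpleGraph V) (H : G.Subgraph) : Prop :=
  IsCycleSubgraph G H ∨
    ∃ (u v : V) (h : G.Adj u v), G.IsBridge s(u, v) ∧ H = G.subgraphOfAdj h

/-- A chain cactus: a cactus in which every block has at most two cut vertices
and every cut vertex lies in exactly two blocks. -/
def IsChainCactus {V : Type*} (G : SimpleGraph V) : Prop :=
  IsCactus G ∧
    (∀ H : G.Subgraph, IsCactusBlock G H → {v ∈ H.verts | IsCutVtx G v}.ncard ≤ 2) ∧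
    (∀ v : V, IsCutVtx G v →
      {H : G.Subgraph | IsCactusBlock G H ∧ v ∈ H.verts}.ncard = 2)

/-- An end-block: a cycle containing exactly one cut vertex of `G`. -/
def IsEndBlock {V : Type*} (G : SimpleGraph V) (C : G.Subgraph) : Prop :=
  IsCycleSubgraph G C ∧ {v ∈ C.verts | IsCutVtx G v}.ncard = 1

/-- The set of vertices lying on some cycle of `G`. -/
def cycleVerts {V : Type*} (G : SimpleGraph V) : Set V :=
  {v | ∃ C : G.Subgraph, IsCycleSubgraph G C ∧ v ∈ C.verts}

/-- The vertices of pendant trees of a cactus, roots removed: vertices lying on no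
cycle and on no path between two cycle vertices (other than as an endpoint). -/
def pendantTreeInterior {V : Type*} (G : SimpleGraph V) : Set V :=
  {v | v ∉ cycleVerts G ∧
    ¬ ∃ (x y : V) (p : G.Walk x y), p.IsPath ∧ x ∈ cycleVerts G ∧
      y ∈ cycleVerts G ∧ v ∈ p.support ∧ v ≠ x ∧ v ≠ y}

set_option linter.unusedSectionVars false

namespace GPAux

variable {V : Type*} [Fintype V] {G : SimpleGraph V}

lemma two_set_eq {s : Set V} (hs : s.ncard = 2) {a b c : V}
    (ha : a ∈ s) (hb : b ∈ s) (hc : c ∈ s) (hba : b ≠ a) (hca : c ≠ a) : b = c := by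
  by_contra hbc
  have hsub : ({a, b, c} : Set V) ⊆ s := by
    intro t ht
    simp only [Set.mem_insert_iff, Set.mem_singleton_iff] at ht
    rcases ht with rfl | rfl | rfl <;> assumption
  have h3 : ({a, b, c} : Set V).ncard = 3 := by
    rw [Set.ncard_insert_of_notMem (by simp [Ne.symm hba, Ne.symm hca]) (Set.toFinite _),
      Set.ncard_pair hbc]
  have hle := Set.ncard_le_ncard hsub (Set.toFinite s)
  omega

lemma walk_support_subset {C : G.Subgraph} :
    ∀ {a b : V} (P : G.Walk a b), a ∈ C.verts →
      (∀ e ∈ P.edges, e ∈ C.edgeSet) → ∀ v ∈ P.support, v ∈ C.verts := by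
  intro a b P
  induction P with
  | nil =>
    intro ha _ v hv
    rw [Walk.support_nil, List.mem_singleton] at hv
    subst hv; exact ha
  | @cons u x b h p ih =>
    intro ha he v hv
    have hedge : s(u, x) ∈ C.edgeSet := he _ (by simp)
    have hx : x ∈ C.verts := C.edge_vert (Subgraph.mem_edgeSet.mp hedge).symm
    rw [Walk.support_cons, List.mem_cons] at hv
    rcases hv with rfl | hv
    · exact ha
    · exact ih hx (fun e he' => he _ (by simp [he'])) v hv

lemma map_hom_edges {C : G.Subgraph} {a b : C.verts} (W : C.coe.Walk a b) :
    ∀ e ∈ (W.map C.hom).edges, e ∈ C.edgeSet := by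
  induction W with
  | nil => simp
  | cons h p ih =>
    intro e he
    rw [Walk.map_cons, Walk.edges_cons, List.mem_cons] at he
    rcases he with rfl | he
    · exact Subgraph.mem_edgeSet.mpr h
    · exact ih e he

lemma exists_cycle_path {C : G.Subgraph} (hC : IsCycleSubgraph G C) {a b : V}
    (ha : a ∈ C.verts) (hb : b ∈ C.verts) :
    ∃ P : G.Walk a b, P.IsPath ∧ ∀ e ∈ P.edges, e ∈ C.edgeSet := by
  classical
  obtain ⟨W0⟩ := hC.2.2.1.preconnected ⟨a, ha⟩ ⟨b, hb⟩
  refine ⟨W0.bypass.map C.hom,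
    Walk.map_isPath_of_injective Subgraph.hom_injective W0.bypass_isPath,
    map_hom_edges _⟩

lemma firstEdge_mem {a b : V} (P : G.Walk a b) (h : ¬P.Nil) :
    s(a, P.getVert 1) ∈ P.edges := by
  obtain ⟨u, hadj, q, rfl⟩ := Walk.not_nil_iff.mp h
  rw [Walk.getVert_cons_succ, Walk.getVert_zero]
  simp

lemma start_neighborSet {a b : V} (P : G.Walk a b) (hP : P.IsPath) (hnil : ¬ P.Nil) :
    P.toSubgraph.neighborSet a = {P.getVert 1} := by
  obtain ⟨u, hadj, q, rfl⟩ := Walk.not_nil_iff.mp hnil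
  obtain ⟨hq, hnq⟩ := (Walk.cons_isPath_iff hadj q).mp hP
  rw [Walk.getVert_cons_succ, Walk.getVert_zero]
  ext x
  simp only [Walk.toSubgraph, Subgraph.neighborSet_sup, Set.mem_union, Set.mem_singleton_iff]
  constructor
  · rintro (hx | hx)
    · rw [Subgraph.mem_neighborSet, subgraphOfAdj_adj] at hx
      exact (Sym2.congr_right.mp hx).symm
    · exfalso
      have : a ∈ q.toSubgraph.verts := q.toSubgraph.edge_vert hx
      rw [Walk.mem_verts_toSubgraph] at this
      exact hnq this
  · rintro rfl
    left
    rw [Subgraph.mem_neighborSet, subgraphOfAdj_adj]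


lemma cycle_start_deg2 {v : V} (Q : G.Walk v v) (hQ : Q.IsCycle) :
    (Q.toSubgraph.neighborSet v).ncard = 2 := by
  have h3 := hQ.three_le_length
  have hnil : ¬ Q.Nil := by rw [Walk.nil_iff_length_eq]; omega
  obtain ⟨w, hadj, q, rfl⟩ := Walk.not_nil_iff.mp hnil
  obtain ⟨hqpath, hes⟩ := (Walk.cons_isCycle_iff q hadj).mp hQ
  rw [Walk.length_cons] at h3
  have hqnil : ¬ q.Nil := by rw [Walk.nil_iff_length_eq]; omega
  have hrnil : ¬ q.reverse.Nil := by rw [Walk.nil_iff_length_eq, Walk.length_reverse]; omega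
  have hrpath : q.reverse.IsPath := hqpath.reverse
  have hstart := start_neighborSet q.reverse hrpath hrnil
  set x := q.reverse.getVert 1 with hx
  have hx_ne : w ≠ x := by
    intro hwx
    apply hes
    have hmem : s(v, x) ∈ q.reverse.edges := by
      rw [hx]; exact firstEdge_mem q.reverse hrnil
    rw [Walk.edges_reverse, List.mem_reverse] at hmem
    rwa [← hwx] at hmem
  have hset : (Walk.cons hadj q).toSubgraph.neighborSet v = {w, x} := by
    show ((G.subgraphOfAdj hadj) ⊔ q.toSubgraph).neighborSet v = {w, x}
    rw [Subgraph.neighborSet_sup, ← Walk.toSubgraph_reverse q, hstart]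
    ext t
    simp only [Set.mem_union, Set.mem_singleton_iff, Set.mem_insert_iff]
    constructor
    · rintro (ht | ht)
      · left
        rw [Subgraph.mem_neighborSet, subgraphOfAdj_adj] at ht
        exact (Sym2.congr_right.mp ht).symm
      · right; exact ht
    · rintro (rfl | rfl)
      · left; rw [Subgraph.mem_neighborSet, subgraphOfAdj_adj]
      · right; rfl
  rw [hset]
  exact Set.ncard_pair hx_ne

lemma cycle_toSubgraph {a : V} (R : G.Walk a a) (hR : R.IsCycle) :
    IsCycleSubgraph G R.toSubgraph := by
  classical
  refine ⟨⟨a, R.start_mem_verts_toSubgraph⟩, Set.toFinite _, R.toSubgraph_connected, ?_⟩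
  intro v hv
  rw [Walk.mem_verts_toSubgraph] at hv
  rw [← R.toSubgraph_rotate hv]
  exact cycle_start_deg2 (R.rotate _ hv) (hR.rotate hv)


lemma no_escape {C : G.Subgraph} (hGc : G.Connected)
    (hcac : ∀ C₁ C₂ : G.Subgraph, IsCycleSubgraph G C₁ → IsCycleSubgraph G C₂ →
      C₁ ≠ C₂ → Disjoint C₁.edgeSet C₂.edgeSet)
    (hC : IsCycleSubgraph G C) :
    ∀ {a b : V} (W : G.Walk a b), a ∈ C.verts → b ∈ C.verts → a ≠ b →
      (∀ e ∈ W.edges, e ∉ C.edgeSet) → False := by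
  classical
  suffices H : ∀ n : ℕ, ∀ {a b : V} (P : G.Walk a b), P.length ≤ n → P.IsPath →
      a ∈ C.verts → b ∈ C.verts → a ≠ b → (∀ e ∈ P.edges, e ∉ C.edgeSet) → False by
    intro a b W ha hb hab he
    exact H W.bypass.length W.bypass le_rfl W.bypass_isPath ha hb hab
      (fun e heb => he e (W.edges_bypass_subset heb))
  intro n
  induction n with
  | zero =>
    intro a b P hlen hP ha hb hab he
    exact hab (Walk.nil_iff_length_eq.mpr (Nat.le_zero.mp hlen)).eq
  | succ n ih =>
    intro a b P hlen hP ha hb hab he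
    by_cases hint : ∃ d ∈ P.support, d ∈ C.verts ∧ d ≠ a ∧ d ≠ b
    · obtain ⟨d, hdsup, hdC, hda, hdb⟩ := hint
      have hdrop : ¬ (P.dropUntil d hdsup).Nil := Walk.not_nil_of_ne hdb
      have hlen2 : (P.takeUntil d hdsup).length + (P.dropUntil d hdsup).length = P.length := by
        rw [← Walk.length_append, P.take_spec hdsup]
      have hdropPos : 1 ≤ (P.dropUntil d hdsup).length := by
        rcases Nat.eq_zero_or_pos (P.dropUntil d hdsup).length with h0 | h1
        · exact absurd (Walk.nil_iff_length_eq.mpr h0) hdrop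
        · exact h1
      exact ih (P.takeUntil d hdsup) (by omega) (hP.takeUntil hdsup) ha hdC (Ne.symm hda)
        (fun e he' => he e (P.edges_takeUntil_subset hdsup he'))
    · push_neg at hint
      obtain ⟨A, hApath, hAe⟩ := exists_cycle_path hC hb ha
      have hAsup : ∀ v ∈ A.support, v ∈ C.verts := walk_support_subset A hb hAe
      have hPnil : ¬ P.Nil := Walk.not_nil_of_ne hab
      have hAnil : ¬ A.Nil := Walk.not_nil_of_ne (Ne.symm hab)
      have hPlen : 1 ≤ P.length := by
        rcases Nat.eq_zero_or_pos P.length with h0 | h1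
        · exact absurd (Walk.nil_iff_length_eq.mpr h0) hPnil
        · exact h1
      have hAlen : 1 ≤ A.length := by
        rcases Nat.eq_zero_or_pos A.length with h0 | h1
        · exact absurd (Walk.nil_iff_length_eq.mpr h0) hAnil
        · exact h1
      have hPtail : a ∉ P.support.tail ∧ P.support.tail.Nodup := by
        have := hP.support_nodup
        rw [Walk.support_eq_cons] at this
        exact List.nodup_cons.mp this
      have hAtail : b ∉ A.support.tail ∧ A.support.tail.Nodup := by
        have := hApath.support_nodup
        rw [Walk.support_eq_cons] at this
        exact List.nodup_cons.mp this
      have hRcyc : (P.append A).IsCycle := by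
        rw [Walk.isCycle_def, Walk.isTrail_def]
        refine ⟨?_, ?_, ?_⟩
        · rw [Walk.edges_append]
          exact List.Nodup.append hP.edges_nodup hApath.edges_nodup
            (fun e heP heA => he e heP (hAe e heA))
        · intro hnil
          have := congrArg Walk.length hnil
          rw [Walk.length_append] at this
          simp only [Walk.length_nil] at this
          omega
        · have hsupp : (P.append A).support = P.support ++ A.support.tail :=
            Walk.support_append _ _
          rw [hsupp, Walk.support_eq_cons, List.cons_append, List.tail_cons]
          refine List.Nodup.append hPtail.2 hAtail.2 ?_
          intro v hv1 hv2
          have hvC : v ∈ C.verts := hAsup v (List.mem_of_mem_tail hv2)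
          have hvsup : v ∈ P.support := List.mem_of_mem_tail hv1
          have hvb : v ≠ b := fun hvb => hAtail.1 (hvb ▸ hv2)
          have hva : v ≠ a := fun hva => hPtail.1 (hva ▸ hv1)
          exact hvb (hint v hvsup hvC hva)
      have hTcyc : IsCycleSubgraph G (P.append A).toSubgraph := cycle_toSubgraph _ hRcyc
      have hPedge : P.edges ≠ [] := by
        intro h0
        have := P.length_edges
        rw [h0] at this
        simp at this
        omega
      have hAedge : A.edges ≠ [] := by
        intro h0
        have := A.length_edges
        rw [h0] at this
        simp at this
        omega
      obtain ⟨eP, hePmem⟩ := List.exists_mem_of_ne_nil _ hPedge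
      obtain ⟨eA, hEAmem⟩ := List.exists_mem_of_ne_nil _ hAedge
      have hne : (P.append A).toSubgraph ≠ C := by
        intro hEq
        apply he eP hePmem
        rw [← hEq]
        rw [Walk.mem_edges_toSubgraph, Walk.edges_append]
        exact List.mem_append_left _ hePmem
      have hdisj := hcac _ C hTcyc hC hne
      refine Set.disjoint_left.mp hdisj ?_ (hAe _ hEAmem)
      rw [Walk.mem_edges_toSubgraph, Walk.edges_append]
      exact List.mem_append_right _ hEAmem


lemma first_hit {C : G.Subgraph} :
    ∀ {x b : V} (P : G.Walk x b), b ∈ C.verts →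
      ∃ d ∈ C.verts, ∃ (P₁ : G.Walk x d) (P₂ : G.Walk d b),
        P₁.length + P₂.length = P.length ∧ (∀ e ∈ P₁.edges, e ∉ C.edgeSet) ∧ d ∈ P.support := by
  intro x b P
  induction P with
  | nil =>
    intro hb
    exact ⟨_, hb, Walk.nil, Walk.nil, by simp, by simp, by simp⟩
  | @cons u y b h p ih =>
    intro hb
    by_cases hu : u ∈ C.verts
    · exact ⟨u, hu, Walk.nil, Walk.cons h p, by simp, by simp, by simp⟩
    · obtain ⟨d, hd, P₁, P₂, hlen, hedges, hdsup⟩ := ih hb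
      refine ⟨d, hd, Walk.cons h P₁, P₂, ?_, ?_, ?_⟩
      · rw [Walk.length_cons, Walk.length_cons]; omega
      · intro e he
        rw [Walk.edges_cons, List.mem_cons] at he
        rcases he with rfl | he
        · intro hmem
          exact hu (C.edge_vert (Subgraph.mem_edgeSet.mp hmem))
        · exact hedges e he
      · rw [Walk.support_cons]; exact List.mem_cons_of_mem _ hdsup

lemma gate_unique {C : G.Subgraph} (hGc : G.Connected)
    (hcac : ∀ C₁ C₂ : G.Subgraph, IsCycleSubgraph G C₁ → IsCycleSubgraph G C₂ →
      C₁ ≠ C₂ → Disjoint C₁.edgeSet C₂.edgeSet)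
    (hC : IsCycleSubgraph G C) {x d₁ d₂ : V}
    (W₁ : G.Walk x d₁) (W₂ : G.Walk x d₂) (h₁ : d₁ ∈ C.verts) (h₂ : d₂ ∈ C.verts)
    (he₁ : ∀ e ∈ W₁.edges, e ∉ C.edgeSet) (he₂ : ∀ e ∈ W₂.edges, e ∉ C.edgeSet) :
    d₁ = d₂ := by
  by_contra hne
  refine no_escape hGc hcac hC (W₁.reverse.append W₂) h₁ h₂ hne ?_
  intro e he
  rw [Walk.edges_append, List.mem_append, Walk.edges_reverse, List.mem_reverse] at he
  rcases he with he | he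
  · exact he₁ e he
  · exact he₂ e he

lemma exists_gate {C : G.Subgraph} (hGc : G.Connected)
    (hcac : ∀ C₁ C₂ : G.Subgraph, IsCycleSubgraph G C₁ → IsCycleSubgraph G C₂ →
      C₁ ≠ C₂ → Disjoint C₁.edgeSet C₂.edgeSet)
    (hC : IsCycleSubgraph G C) (x : V) :
    ∃ c ∈ C.verts, (∃ W : G.Walk x c, ∀ e ∈ W.edges, e ∉ C.edgeSet) ∧
      ∀ u ∈ C.verts, G.dist x u = G.dist x c + G.dist c u := by
  obtain ⟨b, hb⟩ := hC.1
  obtain ⟨P0⟩ := hGc.preconnected x b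
  obtain ⟨c, hc, W₁, W₂, hlen, hW₁, hcsup⟩ := first_hit P0 hb
  refine ⟨c, hc, ⟨W₁, hW₁⟩, ?_⟩
  intro u hu
  refine le_antisymm (hGc.dist_triangle) ?_
  obtain ⟨P, hPpath, hPlen⟩ := hGc.exists_path_of_dist x u
  obtain ⟨d, hd, Q₁, Q₂, hqlen, hQ₁, hdsup⟩ := first_hit P hu
  have hdc : d = c := gate_unique hGc hcac hC Q₁ W₁ hd hc hQ₁ hW₁
  subst hdc
  have h1 := G.dist_le Q₁
  have h2 := G.dist_le Q₂
  omega

lemma path_stays {C : G.Subgraph} (hGc : G.Connected)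
    (hcac : ∀ C₁ C₂ : G.Subgraph, IsCycleSubgraph G C₁ → IsCycleSubgraph G C₂ →
      C₁ ≠ C₂ → Disjoint C₁.edgeSet C₂.edgeSet)
    (hC : IsCycleSubgraph G C) :
    ∀ {a b : V} (P : G.Walk a b), P.IsPath → a ∈ C.verts → b ∈ C.verts →
      ∀ e ∈ P.edges, e ∈ C.edgeSet := by
  intro a b P
  induction P with
  | nil => intro _ _ _ e he; simp at he
  | @cons u y b h p ih =>
    intro hP ha hb e he
    obtain ⟨hppath, husup⟩ := (Walk.cons_isPath_iff h p).mp hP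
    have hy : y ∈ C.verts := by
      by_contra hy
      obtain ⟨d, hd, P₁, P₂, hlen, hedges, hdsup⟩ := first_hit (C := C) p hb
      have hda : d ≠ u := fun hda => husup (hda ▸ hdsup)
      refine no_escape hGc hcac hC (Walk.cons h P₁) ha hd (Ne.symm hda) ?_
      intro e' he'
      rw [Walk.edges_cons, List.mem_cons] at he'
      rcases he' with rfl | he'
      · intro hmem
        exact hy (C.edge_vert (Subgraph.mem_edgeSet.mp hmem).symm)
      · exact hedges e' he'
    have hedge : s(u, y) ∈ C.edgeSet := by
      by_contra hmem
      refine no_escape hGc hcac hC (Walk.cons h Walk.nil) ha hy h.ne ?_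
      intro e' he'
      simp only [Walk.edges_cons, Walk.edges_nil, List.mem_singleton] at he'
      subst he'
      exact hmem
    rw [Walk.edges_cons, List.mem_cons] at he
    rcases he with rfl | he
    · exact hedge
    · exact ih hppath hy hb e he


lemma nest {C : G.Subgraph} (hC : IsCycleSubgraph G C) :
    ∀ {x a : V} (P : G.Walk x a) {b y : V} (Q : G.Walk x b), C.Adj y x →
      P.IsPath → Q.IsPath →
      (∀ e ∈ P.edges, e ∈ C.edgeSet) → (∀ e ∈ Q.edges, e ∈ C.edgeSet) →
      y ∉ P.support → y ∉ Q.support → P.length ≤ Q.length →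
      ∀ v ∈ P.support, v ∈ Q.support := by
  intro x a P
  induction P with
  | nil =>
    intro b y Q _ _ _ _ _ _ _ _ v hv
    rw [Walk.support_nil, List.mem_singleton] at hv
    subst hv
    exact Q.start_mem_support
  | @cons u w a hadj p ih =>
    intro b y Q hyx hP hQ heP heQ hyP hyQ hlen v hv
    cases Q with
    | nil => simp [Walk.length_cons, Walk.length_nil] at hlen
    | @cons _ w' _ hadj' q =>
      have hCuw : C.Adj u w := Subgraph.mem_edgeSet.mp (heP _ (by simp))
      have hCuw' : C.Adj u w' := Subgraph.mem_edgeSet.mp (heQ _ (by simp))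
      have hCuy : C.Adj u y := hyx.symm
      have hu : u ∈ C.verts := C.edge_vert hCuw
      have hN := hC.2.2.2 u hu
      have hwy : w ≠ y := by
        rintro rfl
        exact hyP (by simp)
      have hw'y : w' ≠ y := by
        rintro rfl
        exact hyQ (by simp)
      have hww' : w = w' := two_set_eq hN hCuy hCuw hCuw' hwy hw'y
      subst hww'
      obtain ⟨hppath, husupP⟩ := (Walk.cons_isPath_iff hadj p).mp hP
      obtain ⟨hqpath, husupQ⟩ := (Walk.cons_isPath_iff hadj' q).mp hQ
      have hrec := ih q hCuw hppath hqpath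
        (fun e he => heP e (by simp [he])) (fun e he => heQ e (by simp [he]))
        husupP husupQ (by rw [Walk.length_cons, Walk.length_cons] at hlen; omega)
      rw [Walk.support_cons, List.mem_cons] at hv
      rw [Walk.support_cons]
      rcases hv with rfl | hv
      · exact List.mem_cons_self
      · exact List.mem_cons_of_mem _ (hrec v hv)

lemma on_geodesic (hGc : G.Connected) {c s t : V} (Pt : G.Walk c t)
    (hlen : Pt.length = G.dist c t) (hs : s ∈ Pt.support) :
    G.dist c t = G.dist c s + G.dist s t := by
  classical
  have h1 := G.dist_le (Pt.takeUntil s hs)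
  have h2 := G.dist_le (Pt.dropUntil s hs)
  have h3 : (Pt.takeUntil s hs).length + (Pt.dropUntil s hs).length = Pt.length := by
    rw [← Walk.length_append, Pt.take_spec hs]
  have h4 := hGc.dist_triangle (u := c) (v := s) (w := t)
  omega

lemma pig_pair_le {C : G.Subgraph} (hGc : G.Connected) (hC : IsCycleSubgraph G C)
    {c s t : V} (hcs : c ≠ s) (hct : c ≠ t)
    (Ps : G.Walk c s) (Pt : G.Walk c t) (hPs : Ps.IsPath) (hPt : Pt.IsPath)
    (hePs : ∀ e ∈ Ps.edges, e ∈ C.edgeSet) (hePt : ∀ e ∈ Pt.edges, e ∈ C.edgeSet)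
    (hlent : Pt.length = G.dist c t)
    (hsame : Ps.getVert 1 = Pt.getVert 1) (hle : Ps.length ≤ Pt.length) :
    G.dist c t = G.dist c s + G.dist s t := by
  obtain ⟨us, hadjs, qs, rfl⟩ := Walk.not_nil_iff.mp (Walk.not_nil_of_ne (p := Ps) hcs)
  obtain ⟨ut, hadjt, qt, rfl⟩ := Walk.not_nil_iff.mp (Walk.not_nil_of_ne (p := Pt) hct)
  rw [Walk.getVert_cons_succ, Walk.getVert_zero, Walk.getVert_cons_succ,
    Walk.getVert_zero] at hsame
  subst hsame
  have hCcu : C.Adj c us := Subgraph.mem_edgeSet.mp (hePs _ (by simp))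
  obtain ⟨hqs, hcqs⟩ := (Walk.cons_isPath_iff hadjs qs).mp hPs
  obtain ⟨hqt, hcqt⟩ := (Walk.cons_isPath_iff hadjt qt).mp hPt
  have hsub := nest hC qs qt hCcu hqs hqt
    (fun e he => hePs e (by simp [he])) (fun e he => hePt e (by simp [he]))
    hcqs hcqt (by rw [Walk.length_cons, Walk.length_cons] at hle; omega)
  have hssup : s ∈ (Walk.cons hadjt qt).support := by
    rw [Walk.support_cons]
    exact List.mem_cons_of_mem _ (hsub s qs.end_mem_support)
  exact on_geodesic hGc _ hlent hssup

lemma pig {C : G.Subgraph} (hGc : G.Connected)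
    (hcac : ∀ C₁ C₂ : G.Subgraph, IsCycleSubgraph G C₁ → IsCycleSubgraph G C₂ →
      C₁ ≠ C₂ → Disjoint C₁.edgeSet C₂.edgeSet)
    (hC : IsCycleSubgraph G C)
    {c x y z : V} (hc : c ∈ C.verts) (hx : x ∈ C.verts) (hy : y ∈ C.verts) (hz : z ∈ C.verts)
    (hxy : x ≠ y) (hxz : x ≠ z) (hyz : y ≠ z) :
    ∃ p q : V, (p = x ∨ p = y ∨ p = z) ∧ (q = x ∨ q = y ∨ q = z) ∧ p ≠ q ∧
      G.dist c q = G.dist c p + G.dist p q := by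
  classical
  by_cases hcx : c = x
  · subst hcx
    exact ⟨c, y, Or.inl rfl, Or.inr (Or.inl rfl), fun h => hxy h,
      by rw [SimpleGraph.dist_self]; omega⟩
  by_cases hcy : c = y
  · subst hcy
    exact ⟨c, x, Or.inr (Or.inl rfl), Or.inl rfl, fun h => hxy h.symm,
      by rw [SimpleGraph.dist_self]; omega⟩
  by_cases hcz : c = z
  · subst hcz
    exact ⟨c, x, Or.inr (Or.inr rfl), Or.inl rfl, fun h => hxz h.symm,
      by rw [SimpleGraph.dist_self]; omega⟩
  obtain ⟨Px, hPxp, hPxl⟩ := hGc.exists_path_of_dist c x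
  obtain ⟨Py, hPyp, hPyl⟩ := hGc.exists_path_of_dist c y
  obtain ⟨Pz, hPzp, hPzl⟩ := hGc.exists_path_of_dist c z
  have hex : ∀ e ∈ Px.edges, e ∈ C.edgeSet := path_stays hGc hcac hC Px hPxp hc hx
  have hey : ∀ e ∈ Py.edges, e ∈ C.edgeSet := path_stays hGc hcac hC Py hPyp hc hy
  have hez : ∀ e ∈ Pz.edges, e ∈ C.edgeSet := path_stays hGc hcac hC Pz hPzp hc hz
  have hnx : ¬ Px.Nil := Walk.not_nil_of_ne hcx
  have hny : ¬ Py.Nil := Walk.not_nil_of_ne hcy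
  have hnz : ¬ Pz.Nil := Walk.not_nil_of_ne hcz
  have hax : C.Adj c (Px.getVert 1) := Subgraph.mem_edgeSet.mp (hex _ (firstEdge_mem Px hnx))
  have hay : C.Adj c (Py.getVert 1) := Subgraph.mem_edgeSet.mp (hey _ (firstEdge_mem Py hny))
  have haz : C.Adj c (Pz.getVert 1) := Subgraph.mem_edgeSet.mp (hez _ (firstEdge_mem Pz hnz))
  have hN := hC.2.2.2 c hc
  have hpair : ∀ {s t : V} (hst : s ≠ t) (hcs : c ≠ s) (hct : c ≠ t)
      (Ps : G.Walk c s) (Pt : G.Walk c t), Ps.IsPath → Pt.IsPath →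
      (∀ e ∈ Ps.edges, e ∈ C.edgeSet) → (∀ e ∈ Pt.edges, e ∈ C.edgeSet) →
      Ps.length = G.dist c s → Pt.length = G.dist c t →
      Ps.getVert 1 = Pt.getVert 1 →
      (G.dist c t = G.dist c s + G.dist s t ∨ G.dist c s = G.dist c t + G.dist t s) := by
    intro s t hst hcs hct Ps Pt hPs hPt hes het hlens hlent hsame
    rcases le_total Ps.length Pt.length with hle | hle
    · exact Or.inl (pig_pair_le hGc hC hcs hct Ps Pt hPs hPt hes het hlent hsame hle)
    · exact Or.inr (pig_pair_le hGc hC hct hcs Pt Ps hPt hPs het hes hlens hsame.symm hle)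
  by_cases h1 : Px.getVert 1 = Py.getVert 1
  · rcases hpair hxy hcx hcy Px Py hPxp hPyp hex hey hPxl hPyl h1 with h | h
    · exact ⟨x, y, Or.inl rfl, Or.inr (Or.inl rfl), hxy, h⟩
    · exact ⟨y, x, Or.inr (Or.inl rfl), Or.inl rfl, hxy.symm, h⟩
  by_cases h2 : Px.getVert 1 = Pz.getVert 1
  · rcases hpair hxz hcx hcz Px Pz hPxp hPzp hex hez hPxl hPzl h2 with h | h
    · exact ⟨x, z, Or.inl rfl, Or.inr (Or.inr rfl), hxz, h⟩
    · exact ⟨z, x, Or.inr (Or.inr rfl), Or.inl rfl, hxz.symm, h⟩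
  have h3 : Py.getVert 1 = Pz.getVert 1 :=
    two_set_eq hN hax hay haz (fun h => h1 h.symm) (fun h => h2 h.symm)
  rcases hpair hyz hcy hcz Py Pz hPyp hPzp hey hez hPyl hPzl h3 with h | h
  · exact ⟨y, z, Or.inr (Or.inl rfl), Or.inr (Or.inr rfl), hyz, h⟩
  · exact ⟨z, y, Or.inr (Or.inr rfl), Or.inr (Or.inl rfl), hyz.symm, h⟩


lemma three_distinct {s : Set V} (h : 3 ≤ s.ncard) :
    ∃ x y z, x ∈ s ∧ y ∈ s ∧ z ∈ s ∧ x ≠ y ∧ x ≠ z ∧ y ≠ z := by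
  obtain ⟨x, hx⟩ := Set.nonempty_of_ncard_ne_zero (show s.ncard ≠ 0 by omega)
  have h2 : 2 ≤ (s \ {x}).ncard := by
    rw [Set.ncard_diff_singleton_of_mem hx]; omega
  obtain ⟨y, hy⟩ := Set.nonempty_of_ncard_ne_zero (show (s \ {x}).ncard ≠ 0 by omega)
  have h1 : 1 ≤ ((s \ {x}) \ {y}).ncard := by
    rw [Set.ncard_diff_singleton_of_mem hy]; omega
  obtain ⟨z, hz⟩ := Set.nonempty_of_ncard_ne_zero (show ((s \ {x}) \ {y}).ncard ≠ 0 by omega)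
  obtain ⟨hy1, hy2⟩ := hy
  obtain ⟨⟨hz1, hz2⟩, hz3⟩ := hz
  exact ⟨x, y, z, hx, hy1, hz1, fun h => hy2 h.symm, fun h => hz2 h.symm,
    fun h => hz3 h.symm⟩

lemma four_distinct {s : Set V} (h : 4 ≤ s.ncard) :
    ∃ x y z w, x ∈ s ∧ y ∈ s ∧ z ∈ s ∧ w ∈ s ∧
      x ≠ y ∧ x ≠ z ∧ x ≠ w ∧ y ≠ z ∧ y ≠ w ∧ z ≠ w := by
  obtain ⟨x, hx⟩ := Set.nonempty_of_ncard_ne_zero (show s.ncard ≠ 0 by omega)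
  have h3 : 3 ≤ (s \ {x}).ncard := by
    rw [Set.ncard_diff_singleton_of_mem hx]; omega
  obtain ⟨y, z, w, hy, hz, hw, hyz, hyw, hzw⟩ := three_distinct h3
  obtain ⟨hy1, hy2⟩ := hy
  obtain ⟨hz1, hz2⟩ := hz
  obtain ⟨hw1, hw2⟩ := hw
  exact ⟨x, y, z, w, hx, hy1, hz1, hw1, fun h => hy2 h.symm, fun h => hz2 h.symm,
    fun h => hw2 h.symm, hyz, hyw, hzw⟩

lemma quad_gp (hGc : G.Connected) {u u' w w' c₀ c₁ : V}
    (huu' : u ≠ u') (hww' : w ≠ w')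
    (huw : u ≠ w) (huw' : u ≠ w') (hu'w : u' ≠ w) (hu'w' : u' ≠ w')
    (hd0u : G.dist c₀ u = 1) (hd0u' : G.dist c₀ u' = 1)
    (hd1w : G.dist c₁ w = 1) (hd1w' : G.dist c₁ w' = 1)
    (hnw : w ≠ c₀) (hnw' : w' ≠ c₀) (hnu : u ≠ c₁) (hnu' : u' ≠ c₁)
    (hgw : ∀ t, (t = w ∨ t = w') → ∀ a, (a = u ∨ a = u') →
      G.dist t a = G.dist t c₀ + G.dist c₀ a)
    (hgu : ∀ t, (t = u ∨ t = u') → ∀ a, (a = w ∨ a = w') →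
      G.dist t a = G.dist t c₁ + G.dist c₁ a) :
    IsGPSet G ({u, u', w, w'} : Set V) := by
  have c1 : G.dist u u' = G.dist u' u := G.dist_comm ..
  have c2 : G.dist w w' = G.dist w' w := G.dist_comm ..
  have cuw : G.dist u w = G.dist w u := G.dist_comm ..
  have cuw' : G.dist u w' = G.dist w' u := G.dist_comm ..
  have cu'w : G.dist u' w = G.dist w u' := G.dist_comm ..
  have cu'w' : G.dist u' w' = G.dist w' u' := G.dist_comm ..
  have pw : 1 ≤ G.dist w c₀ := hGc.pos_dist_of_ne hnw
  have pw' : 1 ≤ G.dist w' c₀ := hGc.pos_dist_of_ne hnw'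
  have pu : 1 ≤ G.dist u c₁ := hGc.pos_dist_of_ne hnu
  have pu' : 1 ≤ G.dist u' c₁ := hGc.pos_dist_of_ne hnu'
  have puu' : 1 ≤ G.dist u u' := hGc.pos_dist_of_ne huu'
  have pww' : 1 ≤ G.dist w w' := hGc.pos_dist_of_ne hww'
  have buu' : G.dist u u' ≤ 2 := by
    have := hGc.dist_triangle (u := u) (v := c₀) (w := u')
    have hcu : G.dist u c₀ = 1 := by rw [G.dist_comm]; exact hd0u
    omega
  have bww' : G.dist w w' ≤ 2 := by
    have := hGc.dist_triangle (u := w) (v := c₁) (w := w')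
    have hcw : G.dist w c₁ = 1 := by rw [G.dist_comm]; exact hd1w
    omega
  have gwu : G.dist w u = G.dist w c₀ + 1 := by rw [hgw w (Or.inl rfl) u (Or.inl rfl), hd0u]
  have gwu' : G.dist w u' = G.dist w c₀ + 1 := by rw [hgw w (Or.inl rfl) u' (Or.inr rfl), hd0u']
  have gw'u : G.dist w' u = G.dist w' c₀ + 1 := by rw [hgw w' (Or.inr rfl) u (Or.inl rfl), hd0u]
  have gw'u' : G.dist w' u' = G.dist w' c₀ + 1 := by
    rw [hgw w' (Or.inr rfl) u' (Or.inr rfl), hd0u']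
  have guw : G.dist u w = G.dist u c₁ + 1 := by rw [hgu u (Or.inl rfl) w (Or.inl rfl), hd1w]
  have guw' : G.dist u w' = G.dist u c₁ + 1 := by rw [hgu u (Or.inl rfl) w' (Or.inr rfl), hd1w']
  have gu'w : G.dist u' w = G.dist u' c₁ + 1 := by rw [hgu u' (Or.inr rfl) w (Or.inl rfl), hd1w]
  have gu'w' : G.dist u' w' = G.dist u' c₁ + 1 := by
    rw [hgu u' (Or.inr rfl) w' (Or.inr rfl), hd1w']
  intro x hx y hy z hz hxy hyz hxz
  simp only [Set.mem_insert_iff, Set.mem_singleton_iff] at hx hy hz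
  rcases hx with rfl | rfl | rfl | rfl <;> rcases hy with rfl | rfl | rfl | rfl <;>
    rcases hz with rfl | rfl | rfl | rfl <;>
    first
      | exact absurd rfl hxy
      | exact absurd rfl hyz
      | exact absurd rfl hxz
      | omega

end GPAux

/-- In a cactus with `k ≥ 2` cycles, every gp-set meets every cycle
in fewer than 3 vertices. -/
theorem cycle_meets_gpSet_lt_three {V : Type*} [Fintype V] (G : SimpleGraph V) (k : ℕ)
    (hG : IsCactus G) (hk : 2 ≤ k) (hnum : numCycles G = k)
    (S : Set V) (hS : IsGPMaxSet G S)
    (C₀ : G.Subgraph) (hC₀ : IsCycleSubgraph G C₀) :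
    (C₀.verts ∩ S).ncard < 3 := by
  classical
  by_contra hcon
  push_neg at hcon
  obtain ⟨hGc, hcac⟩ := hG
  obtain ⟨x, y, z, hx, hy, hz, hxy, hxz, hyz⟩ := GPAux.three_distinct hcon
  have hSsub : S ⊆ C₀.verts := by
    intro t ht
    by_contra htC
    obtain ⟨c, hcC, -, hgate⟩ := GPAux.exists_gate hGc hcac hC₀ t
    obtain ⟨p, q, hp, hq, hpq, hdist⟩ :=
      GPAux.pig hGc hcac hC₀ hcC hx.1 hy.1 hz.1 hxy hxz hyz
    have hpC : p ∈ C₀.verts := by rcases hp with rfl | rfl | rfl; exacts [hx.1, hy.1, hz.1]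
    have hqC : q ∈ C₀.verts := by rcases hq with rfl | rfl | rfl; exacts [hx.1, hy.1, hz.1]
    have hpS : p ∈ S := by rcases hp with rfl | rfl | rfl; exacts [hx.2, hy.2, hz.2]
    have hqS : q ∈ S := by rcases hq with rfl | rfl | rfl; exacts [hx.2, hy.2, hz.2]
    have htp : t ≠ p := fun h => htC (h ▸ hpC)
    have htq : t ≠ q := fun h => htC (h ▸ hqC)
    have e1 := hgate q hqC
    have e2 := hgate p hpC
    exact hS.1 t ht p hpS q hqS htp hpq htq (by omega)
  have hC₁ex : ∃ C₁ : G.Subgraph, IsCycleSubgraph G C₁ ∧ C₁ ≠ C₀ := by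
    by_contra hno
    push_neg at hno
    have hsub : {C : G.Subgraph | IsCycleSubgraph G C} ⊆ {C₀} := fun C hC => hno C hC
    have hle := Set.ncard_le_ncard hsub (Set.finite_singleton _)
    rw [Set.ncard_singleton] at hle
    rw [numCycles] at hnum
    omega
  obtain ⟨C₁, hC₁, hC₁ne⟩ := hC₁ex
  have hdisj01 : Disjoint C₀.edgeSet C₁.edgeSet := hcac C₀ C₁ hC₀ hC₁ (Ne.symm hC₁ne)
  have hint : ∀ a ∈ C₀.verts, a ∈ C₁.verts → ∀ b ∈ C₀.verts, b ∈ C₁.verts → a = b := by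
    intro a ha0 ha1 b hb0 hb1
    by_contra hab
    obtain ⟨P, hPp, hPe⟩ := GPAux.exists_cycle_path hC₁ ha1 hb1
    exact GPAux.no_escape hGc hcac hC₀ P ha0 hb0 hab
      (fun e he hmem => Set.disjoint_left.mp hdisj01 hmem (hPe e he))
  have hbig : ∀ (C : G.Subgraph), IsCycleSubgraph G C → 3 ≤ C.verts.ncard := by
    intro C hC
    obtain ⟨⟨v, hv⟩, -, -, hdeg⟩ := hC
    obtain ⟨n₁, n₂, hn12, hset⟩ := Set.ncard_eq_two.mp (hdeg v hv)
    have h1 : C.Adj v n₁ := by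
      rw [← Subgraph.mem_neighborSet, hset]; exact Set.mem_insert _ _
    have h2 : C.Adj v n₂ := by
      rw [← Subgraph.mem_neighborSet, hset]; exact Set.mem_insert_of_mem _ rfl
    have hsub : ({v, n₁, n₂} : Set V) ⊆ C.verts := by
      intro t ht
      simp only [Set.mem_insert_iff, Set.mem_singleton_iff] at ht
      rcases ht with rfl | rfl | rfl
      · exact hv
      · exact C.edge_vert h1.symm
      · exact C.edge_vert h2.symm
    have h3 : ({v, n₁, n₂} : Set V).ncard = 3 := by
      rw [Set.ncard_insert_of_notMem ?_ (Set.toFinite _), Set.ncard_pair hn12]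
      simp only [Set.mem_insert_iff, Set.mem_singleton_iff]
      push_neg
      exact ⟨(C.adj_sub h1).ne, (C.adj_sub h2).ne⟩
    calc 3 = ({v, n₁, n₂} : Set V).ncard := h3.symm
      _ ≤ C.verts.ncard := Set.ncard_le_ncard hsub (Set.toFinite _)
  have hex1 : ∃ t ∈ C₁.verts, t ∉ C₀.verts := by
    by_contra hno
    push_neg at hno
    obtain ⟨a, b, c, ha, hb, hc, hab, hac, hbc⟩ := GPAux.three_distinct (hbig C₁ hC₁)
    exact hab (hint a (hno a ha) ha b (hno b hb) hb)
  obtain ⟨w₀, hw₀1, hw₀0⟩ := hex1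
  have hex0 : ∃ t ∈ C₀.verts, t ∉ C₁.verts := by
    by_contra hno
    push_neg at hno
    obtain ⟨a, b, c, ha, hb, hc, hab, hac, hbc⟩ := GPAux.three_distinct (hbig C₀ hC₀)
    exact hab (hint a ha (hno a ha) b hb (hno b hb))
  obtain ⟨u₀, hu₀0, hu₀1⟩ := hex0
  obtain ⟨c₀, hc₀C, ⟨W₀, hW₀⟩, -⟩ := GPAux.exists_gate hGc hcac hC₀ w₀
  obtain ⟨c₁, hc₁C, ⟨W₁, hW₁⟩, -⟩ := GPAux.exists_gate hGc hcac hC₁ u₀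
  have hgatesC₁ : ∀ t ∈ C₁.verts, t ∉ C₀.verts → ∀ a ∈ C₀.verts,
      G.dist t a = G.dist t c₀ + G.dist c₀ a := by
    intro t ht1 ht0 a ha
    obtain ⟨c, hcC, ⟨W, hW⟩, hgate⟩ := GPAux.exists_gate hGc hcac hC₀ t
    have hcc₀ : c = c₀ := by
      obtain ⟨Q, hQp, hQe⟩ := GPAux.exists_cycle_path hC₁ ht1 hw₀1
      refine GPAux.gate_unique hGc hcac hC₀ W (Q.append W₀) hcC hc₀C hW ?_
      intro e he
      rw [Walk.edges_append, List.mem_append] at he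
      rcases he with he | he
      · exact fun hmem => Set.disjoint_left.mp hdisj01 hmem (hQe e he)
      · exact hW₀ e he
    rw [← hcc₀]
    exact hgate a ha
  have hgatesC₀ : ∀ t ∈ C₀.verts, t ∉ C₁.verts → ∀ a ∈ C₁.verts,
      G.dist t a = G.dist t c₁ + G.dist c₁ a := by
    intro t ht0 ht1 a ha
    obtain ⟨c, hcC, ⟨W, hW⟩, hgate⟩ := GPAux.exists_gate hGc hcac hC₁ t
    have hcc₁ : c = c₁ := by
      obtain ⟨Q, hQp, hQe⟩ := GPAux.exists_cycle_path hC₀ ht0 hu₀0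
      refine GPAux.gate_unique hGc hcac hC₁ W (Q.append W₁) hcC hc₁C hW ?_
      intro e he
      rw [Walk.edges_append, List.mem_append] at he
      rcases he with he | he
      · exact fun hmem => Set.disjoint_left.mp (Disjoint.symm hdisj01) hmem (hQe e he)
      · exact hW₁ e he
    rw [← hcc₁]
    exact hgate a ha
  have hkey₀ : ∀ v, C₀.Adj c₀ v → v ∉ C₁.verts := by
    intro v hadj hv1
    have hv0 : v ∈ C₀.verts := C₀.edge_vert hadj.symm
    obtain ⟨Q, hQp, hQe⟩ := GPAux.exists_cycle_path hC₁ hw₀1 hv1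
    have hc₀v : c₀ = v := GPAux.gate_unique hGc hcac hC₀ W₀ Q hc₀C hv0 hW₀
      (fun e he hmem => Set.disjoint_left.mp hdisj01 hmem (hQe e he))
    exact (C₀.adj_sub hadj).ne hc₀v
  have hkey₁ : ∀ v, C₁.Adj c₁ v → v ∉ C₀.verts := by
    intro v hadj hv0
    have hv1 : v ∈ C₁.verts := C₁.edge_vert hadj.symm
    obtain ⟨Q, hQp, hQe⟩ := GPAux.exists_cycle_path hC₀ hu₀0 hv0
    have hc₁v : c₁ = v := GPAux.gate_unique hGc hcac hC₁ W₁ Q hc₁C hv1 hW₁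
      (fun e he hmem => Set.disjoint_left.mp (Disjoint.symm hdisj01) hmem (hQe e he))
    exact (C₁.adj_sub hadj).ne hc₁v
  obtain ⟨u, u', huu', hset₀⟩ := Set.ncard_eq_two.mp (hC₀.2.2.2 c₀ hc₀C)
  obtain ⟨w, w', hww', hset₁⟩ := Set.ncard_eq_two.mp (hC₁.2.2.2 c₁ hc₁C)
  have hadj_u : C₀.Adj c₀ u := by
    rw [← Subgraph.mem_neighborSet, hset₀]; exact Set.mem_insert _ _
  have hadj_u' : C₀.Adj c₀ u' := by
    rw [← Subgraph.mem_neighborSet, hset₀]; exact Set.mem_insert_of_mem _ rfl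
  have hadj_w : C₁.Adj c₁ w := by
    rw [← Subgraph.mem_neighborSet, hset₁]; exact Set.mem_insert _ _
  have hadj_w' : C₁.Adj c₁ w' := by
    rw [← Subgraph.mem_neighborSet, hset₁]; exact Set.mem_insert_of_mem _ rfl
  have hu0 : u ∈ C₀.verts := C₀.edge_vert hadj_u.symm
  have hu'0 : u' ∈ C₀.verts := C₀.edge_vert hadj_u'.symm
  have hw1 : w ∈ C₁.verts := C₁.edge_vert hadj_w.symm
  have hw'1 : w' ∈ C₁.verts := C₁.edge_vert hadj_w'.symm
  have hu1 : u ∉ C₁.verts := hkey₀ u hadj_u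
  have hu'1 : u' ∉ C₁.verts := hkey₀ u' hadj_u'
  have hw0 : w ∉ C₀.verts := hkey₁ w hadj_w
  have hw'0 : w' ∉ C₀.verts := hkey₁ w' hadj_w'
  have hd0u : G.dist c₀ u = 1 := SimpleGraph.dist_eq_one_iff_adj.mpr (C₀.adj_sub hadj_u)
  have hd0u' : G.dist c₀ u' = 1 := SimpleGraph.dist_eq_one_iff_adj.mpr (C₀.adj_sub hadj_u')
  have hd1w : G.dist c₁ w = 1 := SimpleGraph.dist_eq_one_iff_adj.mpr (C₁.adj_sub hadj_w)
  have hd1w' : G.dist c₁ w' = 1 := SimpleGraph.dist_eq_one_iff_adj.mpr (C₁.adj_sub hadj_w')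
  have huw : u ≠ w := fun h => hu1 (h ▸ hw1)
  have huw' : u ≠ w' := fun h => hu1 (h ▸ hw'1)
  have hu'w : u' ≠ w := fun h => hu'1 (h ▸ hw1)
  have hu'w' : u' ≠ w' := fun h => hu'1 (h ▸ hw'1)
  have hTgp : IsGPSet G ({u, u', w, w'} : Set V) := by
    refine GPAux.quad_gp hGc huu' hww' huw huw' hu'w hu'w' hd0u hd0u' hd1w hd1w'
      (fun h => hw0 (h ▸ hc₀C)) (fun h => hw'0 (h ▸ hc₀C))
      (fun h => hu1 (h ▸ hc₁C)) (fun h => hu'1 (h ▸ hc₁C)) ?_ ?_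
    · intro t htw a hau
      have ht1 : t ∈ C₁.verts := by rcases htw with rfl | rfl; exacts [hw1, hw'1]
      have ht0 : t ∉ C₀.verts := by rcases htw with rfl | rfl; exacts [hw0, hw'0]
      have ha0 : a ∈ C₀.verts := by rcases hau with rfl | rfl; exacts [hu0, hu'0]
      exact hgatesC₁ t ht1 ht0 a ha0
    · intro t htu a haw
      have ht0 : t ∈ C₀.verts := by rcases htu with rfl | rfl; exacts [hu0, hu'0]
      have ht1 : t ∉ C₁.verts := by rcases htu with rfl | rfl; exacts [hu1, hu'1]
      have ha1 : a ∈ C₁.verts := by rcases haw with rfl | rfl; exacts [hw1, hw'1]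
      exact hgatesC₀ t ht0 ht1 a ha1
  have hT4 : ({u, u', w, w'} : Set V).ncard = 4 := by
    rw [Set.ncard_insert_of_notMem (by simp [huu', huw, huw']) (Set.toFinite _),
      Set.ncard_insert_of_notMem (by simp [hu'w, hu'w']) (Set.toFinite _),
      Set.ncard_pair hww']
  have hbdd : BddAbove {n : ℕ | ∃ T : Set V, IsGPSet G T ∧ T.ncard = n} := by
    refine ⟨Fintype.card V, ?_⟩
    rintro n ⟨T, -, rfl⟩
    have := Set.ncard_le_ncard (Set.subset_univ T) Set.finite_univ
    rwa [Set.ncard_univ, Nat.card_eq_fintype_card] at this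
  have h4 : 4 ≤ gpNumber G := by
    refine le_csSup hbdd ?_
    exact ⟨({u, u', w, w'} : Set V), hTgp, hT4⟩
  have hS4 : 4 ≤ S.ncard := by rw [hS.2]; exact h4
  obtain ⟨a, b, c, d, haS, hbS, hcS, hdS, hab, hac, had, hbc, hbd, hcd⟩ :=
    GPAux.four_distinct hS4
  obtain ⟨p, q, hp, hq, hpq, hdist⟩ := GPAux.pig hGc hcac hC₀ (hSsub haS) (hSsub hbS)
    (hSsub hcS) (hSsub hdS) hbc hbd hcd
  have hpS : p ∈ S := by rcases hp with rfl | rfl | rfl; exacts [hbS, hcS, hdS]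
  have hqS : q ∈ S := by rcases hq with rfl | rfl | rfl; exacts [hbS, hcS, hdS]
  have hap : a ≠ p := by rcases hp with rfl | rfl | rfl; exacts [hab, hac, had]
  have haq : a ≠ q := by rcases hq with rfl | rfl | rfl; exacts [hab, hac, had]
  exact hS.1 a haS p hpS q hqS hap hpq haq hdist
end

section
/- If G is a cactus graph containing at least two cycles, then gp(G) ≥ 4. -/
open SimpleGraph

namespace GPAux

open SimpleGraph

variable {V : Type*} {G : SimpleGraph V}

/-! ### Generic walk helpers -/

lemma not_nil_of_ne {u v : V} {p : G.Walk u v} (h : u ≠ v) : ¬ p.Nil := by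
  intro hnil
  exact h (Walk.eq_of_length_eq_zero (Walk.nil_iff_length_eq.mp hnil))

lemma getVert_one_mem_support {u v : V} (p : G.Walk u v) (h : ¬ p.Nil) :
    p.getVert 1 ∈ p.support := by
  cases p with
  | nil => simp at h
  | cons h' q =>
    rw [Walk.getVert_cons_succ, Walk.getVert_zero, Walk.support_cons]
    exact List.mem_cons_of_mem _ q.start_mem_support

lemma first_edge_mem {u v : V} (p : G.Walk u v) (h : ¬ p.Nil) :
    s(u, p.getVert 1) ∈ p.edges := by
  cases p with
  | nil => simp at h
  | cons h' q =>
    rw [Walk.getVert_cons_succ, Walk.getVert_zero, Walk.edges_cons]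
    exact List.mem_cons_self

/-! ### Neighborhoods in the subgraph of a path/cycle -/

lemma nbhd_empty_of_not_mem_support {u v w : V} (p : G.Walk u v) (h : w ∉ p.support) :
    p.toSubgraph.neighborSet w = ∅ := by
  ext x
  simp only [Set.mem_empty_iff_false, iff_false, Subgraph.mem_neighborSet]
  intro hadj
  exact h ((Walk.mem_verts_toSubgraph p).mp hadj.fst_mem)

lemma path_nbhd_start {u v : V} (p : G.Walk u v) (hp : p.IsPath) (hne : u ≠ v) :
    p.toSubgraph.neighborSet u = {p.getVert 1} := by
  cases p with
  | nil => exact absurd rfl hne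
  | cons h' q =>
    rw [Walk.cons_isPath_iff] at hp
    simp only [Walk.toSubgraph, Subgraph.neighborSet_sup,
      neighborSet_fst_subgraphOfAdj, Walk.getVert_cons_succ, Walk.getVert_zero,
      nbhd_empty_of_not_mem_support q hp.2, Set.union_empty]

lemma path_nbhd_end {u v : V} (p : G.Walk u v) (hp : p.IsPath) (hne : u ≠ v) :
    p.toSubgraph.neighborSet v = {p.reverse.getVert 1} := by
  rw [← Walk.toSubgraph_reverse]
  exact path_nbhd_start p.reverse hp.reverse hne.symm

lemma path_nbhd_internal {u v w : V} (p : G.Walk u v) (hp : p.IsPath)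
    (hw : w ∈ p.support) (hwu : w ≠ u) (hwv : w ≠ v) :
    (p.toSubgraph.neighborSet w).ncard = 2 := by
  induction p with
  | nil =>
    rw [Walk.support_nil] at hw
    exact absurd (List.mem_singleton.mp hw) hwu
  | @cons a b c h' q ih =>
    rw [Walk.cons_isPath_iff] at hp
    rw [Walk.support_cons] at hw
    have hwq : w ∈ q.support := by
      rcases List.mem_cons.mp hw with h1 | h1
      · exact absurd h1 hwu
      · exact h1
    simp only [Walk.toSubgraph, Subgraph.neighborSet_sup]
    by_cases hwb : w = b
    · subst hwb
      rw [neighborSet_snd_subgraphOfAdj, path_nbhd_start q hp.1 hwv]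
      rw [Set.singleton_union]
      apply Set.ncard_pair
      intro haq
      exact hp.2 (haq ▸ getVert_one_mem_support q (not_nil_of_ne hwv))
    · rw [neighborSet_subgraphOfAdj_of_ne_of_ne h' hwu hwb, Set.empty_union]
      exact ih hp.1 hwq hwb hwv

lemma cycle_nbhd_two {s : V} (c : G.Walk s s) (hc : c.IsCycle) :
    ∀ v ∈ c.toSubgraph.verts, (c.toSubgraph.neighborSet v).ncard = 2 := by
  intro v hv
  cases c with
  | nil => exact absurd hc (Walk.IsCycle.not_of_nil)
  | @cons _ b _ h' q =>
    rw [Walk.cons_isCycle_iff] at hc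
    obtain ⟨hq, he⟩ := hc
    have hbs : b ≠ s := h'.ne.symm
    rw [Walk.mem_verts_toSubgraph, Walk.support_cons] at hv
    simp only [Walk.toSubgraph, Subgraph.neighborSet_sup]
    by_cases hvs : v = s
    · subst hvs
      rw [neighborSet_fst_subgraphOfAdj, path_nbhd_end q hq hbs]
      rw [Set.singleton_union]
      apply Set.ncard_pair
      intro hbq
      apply he
      have hfe := first_edge_mem q.reverse (not_nil_of_ne hbs.symm)
      rw [← hbq] at hfe
      rw [Walk.edges_reverse] at hfe
      exact List.mem_reverse.mp hfe
    · have hvq : v ∈ q.support := by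
        rcases List.mem_cons.mp hv with h1 | h1
        · exact absurd h1 hvs
        · exact h1
      by_cases hvb : v = b
      · subst hvb
        rw [neighborSet_snd_subgraphOfAdj, path_nbhd_start q hq hbs]
        rw [Set.singleton_union]
        apply Set.ncard_pair
        intro haq
        apply he
        have hfe := first_edge_mem q (not_nil_of_ne hbs)
        rw [← haq] at hfe
        rwa [Sym2.eq_swap] at hfe
      · rw [neighborSet_subgraphOfAdj_of_ne_of_ne h' hvs hvb, Set.empty_union]
        exact path_nbhd_internal q hq hvq hvb hvs

lemma isCycleSubgraph_toSubgraph {s : V} (c : G.Walk s s) (hc : c.IsCycle) :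
    IsCycleSubgraph G c.toSubgraph := by
  classical
  refine ⟨⟨s, c.start_mem_verts_toSubgraph⟩, ?_, ?_, cycle_nbhd_two c hc⟩
  · apply Set.Finite.ofFinset c.support.toFinset
    intro x
    simp [Walk.mem_verts_toSubgraph]
  · exact Subgraph.connected_iff'.mp c.toSubgraph_connected

/-! ### First hit of a set along a walk -/

lemma firstHit {S : Set V} {x t : V} (p : G.Walk x t) (ht : t ∈ S) :
    ∃ (z : V) (q : G.Walk x z) (q' : G.Walk z t), z ∈ S ∧ (∀ e ∈ q.edges, e ∈ p.edges) ∧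
      (∀ v ∈ q.support, v ∈ p.support) ∧ (∀ v ∈ q.support, v ∈ S → v = z) ∧
      q.length + q'.length = p.length ∧ (p.IsPath → q.IsPath) := by
  classical
  induction p with
  | nil =>
    refine ⟨_, Walk.nil, Walk.nil, ht, by simp, by simp, ?_, by simp, fun _ => Walk.IsPath.nil⟩
    intro v hv _
    simpa using hv
  | @cons u v' w h p' ih =>
    by_cases hu : u ∈ S
    · refine ⟨u, Walk.nil, Walk.cons h p', hu, by simp, by simp, ?_, by simp,
        fun _ => Walk.IsPath.nil⟩
      intro v hv _
      simpa using hv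
    · obtain ⟨z, q, q', hz, hqe, hqs, hqhit, hqlen, hqpath⟩ := ih ht
      refine ⟨z, Walk.cons h q, q', hz, ?_, ?_, ?_, ?_, ?_⟩
      · intro e he
        rw [Walk.edges_cons] at he ⊢
        rcases List.mem_cons.mp he with h1 | h1
        · exact h1 ▸ List.mem_cons_self
        · exact List.mem_cons_of_mem _ (hqe _ h1)
      · intro v hv
        rw [Walk.support_cons] at hv ⊢
        rcases List.mem_cons.mp hv with h1 | h1
        · exact h1 ▸ List.mem_cons_self
        · exact List.mem_cons_of_mem _ (hqs _ h1)
      · intro v hv hvS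
        rw [Walk.support_cons] at hv
        rcases List.mem_cons.mp hv with h1 | h1
        · exact absurd (h1 ▸ hvS) hu
        · exact hqhit v h1 hvS
      · rw [Walk.length_cons, Walk.length_cons]
        omega
      · intro hP
        rw [Walk.cons_isPath_iff] at hP ⊢
        exact ⟨hqpath hP.1, fun hc => hP.2 (hqs _ hc)⟩

lemma support_hits_of_far {u v : V} (W : G.Walk u v) {S : Set V}
    (hfar : ∀ x ∈ S, W.length ≤ G.dist u x) : ∀ x ∈ W.support, x ∈ S → x = v := by
  intro x hx hxS
  obtain ⟨A, B, rfl⟩ := Walk.mem_support_iff_exists_append.mp hx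
  have h1 : G.dist u x ≤ A.length := SimpleGraph.dist_le A
  have h2 := hfar x hxS
  rw [Walk.length_append] at h2
  exact Walk.eq_of_length_eq_zero (p := B) (by omega)

lemma edges_not_mem_of_support_hits {C : G.Subgraph} {a b y : V} (q : G.Walk a b)
    (h : ∀ v ∈ q.support, v ∈ C.verts → v = y) : ∀ e ∈ q.edges, e ∉ C.edgeSet := by
  intro e he hC
  induction e with
  | h x z =>
    have hadj : C.Adj x z := Subgraph.mem_edgeSet.mp hC
    have hx : x = y := h x (q.fst_mem_support_of_mem_edges he) hadj.fst_mem
    have hz : z = y := h z (q.snd_mem_support_of_mem_edges he) hadj.snd_mem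
    exact hadj.adj_sub.ne (hx.trans hz.symm)

/-! ### Walks inside a subgraph -/

lemma exists_walk_in_subgraph {C : G.Subgraph} (hC : C.coe.Connected) {a b : V}
    (ha : a ∈ C.verts) (hb : b ∈ C.verts) :
    ∃ r : G.Walk a b, r.IsPath ∧ (∀ e ∈ r.edges, e ∈ C.edgeSet) ∧
      ∀ v ∈ r.support, v ∈ C.verts := by
  classical
  have hpc : C.Preconnected := (Subgraph.connected_iff'.mpr hC).preconnected
  obtain ⟨p, hp⟩ := (Subgraph.preconnected_iff_forall_exists_walk_subgraph C).mp hpc ha hb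
  refine ⟨p.toPath, p.toPath.2, ?_, ?_⟩
  · intro e he
    exact Subgraph.edgeSet_mono hp ((p.mem_edges_toSubgraph).mpr (Walk.edges_toPath_subset p he))
  · intro v hv
    exact Subgraph.verts_mono hp ((p.mem_verts_toSubgraph).mpr (Walk.support_toPath_subset p hv))

/-! ### The detour lemma: no outside connection between two vertices of a cycle of a cactus -/

lemma detour (hG : IsCactus G) {C : G.Subgraph} (hC : IsCycleSubgraph G C) {s t : V}
    (hs : s ∈ C.verts) (ht : t ∈ C.verts) (hst : s ≠ t) (W : G.Walk s t)
    (hW : ∀ e ∈ W.edges, e ∉ C.edgeSet) : False := by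
  classical
  obtain ⟨p0, hp0path, hp0e⟩ : ∃ p0 : G.Walk s t, p0.IsPath ∧ ∀ e ∈ p0.edges, e ∉ C.edgeSet :=
    ⟨W.toPath, W.toPath.2, fun e he => hW e (Walk.edges_toPath_subset W he)⟩
  cases p0 with
  | nil => exact hst rfl
  | @cons _ y _ h p' =>
    rw [Walk.cons_isPath_iff] at hp0path
    obtain ⟨hp'path, hsp'⟩ := hp0path
    obtain ⟨z, q, q', hzC, hqe, hqs, hqhit, hqlen, hqpath⟩ := firstHit (S := C.verts) p' ht
    have hqP : q.IsPath := hqpath hp'path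
    have hzs : z ≠ s := by
      intro hzs
      exact hsp' (hqs _ (hzs ▸ q.end_mem_support))
    have hQpath : (Walk.cons h q).IsPath := by
      rw [Walk.cons_isPath_iff]
      exact ⟨hqP, fun hsq => hsp' (hqs _ hsq)⟩
    have hQe : ∀ e ∈ (Walk.cons h q).edges, e ∉ C.edgeSet := by
      intro e he
      rw [Walk.edges_cons] at he
      rcases List.mem_cons.mp he with h1 | h1
      · exact h1 ▸ hp0e _ (by rw [Walk.edges_cons]; exact List.mem_cons_self)
      · exact hp0e _ (by rw [Walk.edges_cons]; exact List.mem_cons_of_mem _ (hqe _ h1))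
    obtain ⟨r, hrP, hre, hrs⟩ := exists_walk_in_subgraph hC.2.2.1 hzC hs
    have hzr : z ∉ r.support.tail ∧ r.support.tail.Nodup := by
      have := hrP.support_nodup
      rw [r.support_eq_cons] at this
      exact ⟨(List.nodup_cons.mp this).1, (List.nodup_cons.mp this).2⟩
    have hc0 : ((Walk.cons h q).append r).IsCycle := by
      rw [Walk.isCycle_def]
      refine ⟨⟨?_⟩, ?_, ?_⟩
      · rw [Walk.edges_append]
        refine List.Nodup.append hQpath.isTrail.edges_nodup hrP.isTrail.edges_nodup ?_
        intro e heQ her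
        exact hQe e heQ (hre e her)
      · intro hnil
        have h0 := congrArg Walk.length hnil
        rw [Walk.length_append, Walk.length_cons] at h0
        simp at h0
      · rw [Walk.tail_support_append]
        refine List.Nodup.append ?_ hzr.2 ?_
        · rw [Walk.support_cons, List.tail_cons]
          exact hqP.support_nodup
        · rw [Walk.support_cons, List.tail_cons]
          intro v hvq hvr
          have hvC : v ∈ C.verts := hrs _ (List.mem_of_mem_tail hvr)
          have hvz : v = z := hqhit v hvq hvC
          exact hzr.1 (hvz ▸ hvr)
    have hCS := isCycleSubgraph_toSubgraph _ hc0
    have hneC : ((Walk.cons h q).append r).toSubgraph ≠ C := by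
      intro hEq
      have hsyC : s(s, y) ∉ C.edgeSet := hp0e _ (by rw [Walk.edges_cons]; exact List.mem_cons_self)
      apply hsyC
      rw [← hEq]
      apply (Walk.mem_edges_toSubgraph _).mpr
      rw [Walk.edges_append, Walk.edges_cons]
      exact List.mem_append_left _ (List.mem_cons_self)
    have hdisj := hG.2 _ _ hCS hC hneC
    have hrnil : ¬ r.Nil := not_nil_of_ne hzs
    have he0r : s(z, r.getVert 1) ∈ r.edges := first_edge_mem r hrnil
    have he0C : s(z, r.getVert 1) ∈ C.edgeSet := hre _ he0r
    have he0c0 : s(z, r.getVert 1) ∈ ((Walk.cons h q).append r).toSubgraph.edgeSet := by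
      apply (Walk.mem_edges_toSubgraph _).mpr
      rw [Walk.edges_append]
      exact List.mem_append_right _ he0r
    exact Set.disjoint_left.mp hdisj he0c0 he0C

end GPAux

namespace GPAux

open SimpleGraph

variable {V : Type*} {G : SimpleGraph V}

/-- The key distance computation: if `u1, u2` realize the minimum distance `L` between
two distinct cycles of a cactus, then every neighbour of `u2` on `C2` is at distance
exactly `L+2` from every neighbour of `u1` on `C1`. -/
lemma cross_dist (hG : IsCactus G) {C1 C2 : G.Subgraph} (hC1 : IsCycleSubgraph G C1)
    (hC2 : IsCycleSubgraph G C2) (hne : C1 ≠ C2) {u1 u2 : V} (hu1 : u1 ∈ C1.verts)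
    (hu2 : u2 ∈ C2.verts) {L : ℕ} (hL : G.dist u1 u2 = L)
    (hmin : ∀ a ∈ C1.verts, ∀ b ∈ C2.verts, L ≤ G.dist a b)
    {w x : V} (hw : C2.Adj u2 w) (hx : C1.Adj u1 x) : G.dist w x = L + 2 := by
  have hGc : G.Connected := hG.1
  have hdisjE : Disjoint C1.edgeSet C2.edgeSet := hG.2 C1 C2 hC1 hC2 hne
  -- the two cycles share at most the vertex u1 = u2
  have hshared : ∀ v, v ∈ C1.verts → v ∈ C2.verts → v = u1 ∧ v = u2 := by
    intro v h1 h2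
    have hL0 : L = 0 := by
      have := hmin v h1 v h2
      rw [SimpleGraph.dist_self] at this
      omega
    have hu12 : u1 = u2 := by
      rw [hL0] at hL
      exact hGc.dist_eq_zero_iff.mp hL
    have hvu1 : v = u1 := by
      by_contra hvne
      obtain ⟨r, _, hre, _⟩ := exists_walk_in_subgraph hC2.2.2.1 h2 (hu12 ▸ hu2)
      exact detour hG hC1 h1 hu1 hvne r
        (fun e her hC1e => Set.disjoint_left.mp hdisjE hC1e (hre e her))
    exact ⟨hvu1, hu12 ▸ hvu1⟩
  -- basic facts about w and x
  have hwC2 : w ∈ C2.verts := hw.snd_mem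
  have hwu2 : w ≠ u2 := hw.adj_sub.ne.symm
  have hwC1 : w ∉ C1.verts := fun hmem => hwu2 (hshared w hmem hwC2).2
  have hxC1 : x ∈ C1.verts := hx.snd_mem
  have hxu1 : x ≠ u1 := hx.adj_sub.ne.symm
  -- a geodesic between the cycles
  obtain ⟨P, hPlen⟩ := hGc.exists_walk_length_eq_dist u1 u2
  rw [hL] at hPlen
  have hP_C2 : ∀ v ∈ P.support, v ∈ C2.verts → v = u2 :=
    support_hits_of_far P (fun v hv => by rw [hPlen]; exact hmin u1 hu1 v hv)
  have hP_C1 : ∀ v ∈ P.support, v ∈ C1.verts → v = u1 := by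
    intro v hv hvC1
    have hv' : v ∈ P.reverse.support := by rwa [Walk.support_reverse, List.mem_reverse]
    refine support_hits_of_far P.reverse (fun z hz => ?_) v hv' hvC1
    rw [Walk.length_reverse, hPlen, SimpleGraph.dist_comm]
    exact hmin z hz u2 hu2
  -- every vertex of C1 is at distance at least L+1 from w
  have hge : ∀ v ∈ C1.verts, L + 1 ≤ G.dist w v := by
    intro v hv
    by_contra hlt
    push_neg at hlt
    obtain ⟨R, hRlen⟩ := hGc.exists_walk_length_eq_dist w v
    obtain ⟨y, q, q', hyC2, hqe, hqs, hqhit, hqlen, _⟩ :=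
      firstHit (S := C2.verts) R.reverse hwC2
    by_cases hyu2 : y = u2
    · have h1 : G.dist v u2 ≤ q.length := by rw [← hyu2]; exact SimpleGraph.dist_le q
      have h2 : G.dist u2 w ≤ q'.length := by rw [← hyu2]; exact SimpleGraph.dist_le q'
      have h3 : 0 < G.dist u2 w := hGc.pos_dist_of_ne hwu2.symm
      have h4 : L ≤ G.dist v u2 := hmin v hv u2 hu2
      rw [Walk.length_reverse, hRlen] at hqlen
      omega
    · obtain ⟨r1, _, hr1e, _⟩ := exists_walk_in_subgraph hC1.2.2.1 hv hu1
      refine detour hG hC2 hyC2 hu2 hyu2 (q.reverse.append (r1.append P)) ?_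
      intro e he
      rw [Walk.edges_append, Walk.edges_append] at he
      rcases List.mem_append.mp he with h1 | h1
      · rw [Walk.edges_reverse, List.mem_reverse] at h1
        exact edges_not_mem_of_support_hits q hqhit e h1
      · rcases List.mem_append.mp h1 with h2 | h2
        · exact fun hmem => Set.disjoint_left.mp hdisjE (hr1e e h2) hmem
        · exact edges_not_mem_of_support_hits P hP_C2 e h2
  -- the explicit walk from w to u1
  have hdist_wx_le : G.dist w x ≤ L + 2 := by
    have htri : G.dist w x ≤ G.dist w u1 + G.dist u1 x := hGc.dist_triangle
    have h1 : G.dist w u1 ≤ L + 1 := by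
      have := SimpleGraph.dist_le (Walk.cons hw.adj_sub.symm P.reverse)
      rwa [Walk.length_cons, Walk.length_reverse, hPlen] at this
    have h2 : G.dist u1 x = 1 := SimpleGraph.dist_eq_one_iff_adj.mpr hx.adj_sub
    omega
  -- lower bound
  by_contra hne2
  have hlt : G.dist w x ≤ L + 1 := by
    rcases Nat.lt_or_ge (G.dist w x) (L + 2) with h | h
    · omega
    · exact absurd (le_antisymm hdist_wx_le h) hne2
  have heq : G.dist w x = L + 1 := le_antisymm hlt (hge x hxC1)
  obtain ⟨Wg, hWlen⟩ := hGc.exists_walk_length_eq_dist w x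
  rw [heq] at hWlen
  have hWhit : ∀ v ∈ Wg.support, v ∈ C1.verts → v = x :=
    support_hits_of_far Wg (fun v hv => by rw [hWlen]; exact hge v hv)
  have hW'hit : ∀ v ∈ (Walk.cons hw.adj_sub.symm P.reverse).support, v ∈ C1.verts → v = u1 := by
    intro v hv hvC1
    rw [Walk.support_cons] at hv
    rcases List.mem_cons.mp hv with h1 | h1
    · exact absurd (h1 ▸ hvC1) hwC1
    · rw [Walk.support_reverse, List.mem_reverse] at h1
      exact hP_C1 v h1 hvC1
  refine detour hG hC1 hxC1 hu1 hxu1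
    (Wg.reverse.append (Walk.cons hw.adj_sub.symm P.reverse)) ?_
  intro e he
  rw [Walk.edges_append] at he
  rcases List.mem_append.mp he with h1 | h1
  · rw [Walk.edges_reverse, List.mem_reverse] at h1
    exact edges_not_mem_of_support_hits Wg hWhit e h1
  · exact edges_not_mem_of_support_hits _ hW'hit e h1

end GPAux

/-- A cactus with at least two cycles has gp-number at least 4. -/
theorem gp_ge_four_of_two_cycles {V : Type*} [Fintype V] (G : SimpleGraph V)
    (hG : IsCactus G) (h2 : 2 ≤ numCycles G) :
    4 ≤ gpNumber G := by
  classical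
  have hGc : G.Connected := hG.1
  -- extract two distinct cycles
  obtain ⟨C1, C2, hC1, hC2, hne⟩ :
      ∃ C1 C2 : G.Subgraph, IsCycleSubgraph G C1 ∧ IsCycleSubgraph G C2 ∧ C1 ≠ C2 := by
    by_contra hno
    push_neg at hno
    have hsub : {C : G.Subgraph | IsCycleSubgraph G C}.Subsingleton := by
      intro A hA B hB
      by_contra hAB
      exact hAB (hno A B hA hB)
    rcases hsub.eq_empty_or_singleton with h | ⟨a, h⟩
    · rw [numCycles, h, Set.ncard_empty] at h2; omega
    · rw [numCycles, h, Set.ncard_singleton] at h2; omega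
  -- minimal distance pair between the two cycles
  set Dset : Set ℕ := {n | ∃ a ∈ C1.verts, ∃ b ∈ C2.verts, G.dist a b = n} with hDset
  have hDne : Dset.Nonempty := by
    obtain ⟨v1, hv1⟩ := hC1.1
    obtain ⟨v2, hv2⟩ := hC2.1
    exact ⟨G.dist v1 v2, v1, hv1, v2, hv2, rfl⟩
  obtain ⟨u1, hu1, u2, hu2, hL⟩ := Nat.sInf_mem hDne
  set L : ℕ := sInf Dset with hLdef
  have hmin : ∀ a ∈ C1.verts, ∀ b ∈ C2.verts, L ≤ G.dist a b :=
    fun a ha b hb => Nat.sInf_le ⟨a, ha, b, hb, rfl⟩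
  -- neighbours of u1 on C1 and of u2 on C2
  obtain ⟨a, b, hab, hNab⟩ := Set.ncard_eq_two.mp (hC1.2.2.2 u1 hu1)
  obtain ⟨c, d, hcd, hNcd⟩ := Set.ncard_eq_two.mp (hC2.2.2.2 u2 hu2)
  have haA : C1.Adj u1 a := by
    have : a ∈ C1.neighborSet u1 := by rw [hNab]; exact Set.mem_insert _ _
    exact this
  have hbA : C1.Adj u1 b := by
    have : b ∈ C1.neighborSet u1 := by rw [hNab]; exact Set.mem_insert_iff.mpr (Or.inr rfl)
    exact this
  have hcA : C2.Adj u2 c := by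
    have : c ∈ C2.neighborSet u2 := by rw [hNcd]; exact Set.mem_insert _ _
    exact this
  have hdA : C2.Adj u2 d := by
    have : d ∈ C2.neighborSet u2 := by rw [hNcd]; exact Set.mem_insert_iff.mpr (Or.inr rfl)
    exact this
  -- cross distances
  have key : ∀ w0, C2.Adj u2 w0 → ∀ x0, C1.Adj u1 x0 → G.dist w0 x0 = L + 2 :=
    fun w0 hw0 x0 hx0 => GPAux.cross_dist hG hC1 hC2 hne hu1 hu2 hL hmin hw0 hx0
  have hca : G.dist c a = L + 2 := key c hcA a haA
  have hcb : G.dist c b = L + 2 := key c hcA b hbA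
  have hda : G.dist d a = L + 2 := key d hdA a haA
  have hdb : G.dist d b = L + 2 := key d hdA b hbA
  have hac : G.dist a c = L + 2 := by rw [SimpleGraph.dist_comm]; exact hca
  have hbc : G.dist b c = L + 2 := by rw [SimpleGraph.dist_comm]; exact hcb
  have had : G.dist a d = L + 2 := by rw [SimpleGraph.dist_comm]; exact hda
  have hbd : G.dist b d = L + 2 := by rw [SimpleGraph.dist_comm]; exact hdb
  -- distances within each pair
  have hab2 : G.dist a b ≤ 2 := by
    have htri : G.dist a b ≤ G.dist a u1 + G.dist u1 b := hGc.dist_triangle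
    have h1 : G.dist a u1 = 1 := SimpleGraph.dist_eq_one_iff_adj.mpr haA.adj_sub.symm
    have h2 : G.dist u1 b = 1 := SimpleGraph.dist_eq_one_iff_adj.mpr hbA.adj_sub
    omega
  have hab1 : 1 ≤ G.dist a b := hGc.pos_dist_of_ne hab
  have hcd2 : G.dist c d ≤ 2 := by
    have htri : G.dist c d ≤ G.dist c u2 + G.dist u2 d := hGc.dist_triangle
    have h1 : G.dist c u2 = 1 := SimpleGraph.dist_eq_one_iff_adj.mpr hcA.adj_sub.symm
    have h2 : G.dist u2 d = 1 := SimpleGraph.dist_eq_one_iff_adj.mpr hdA.adj_sub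
    omega
  have hcd1 : 1 ≤ G.dist c d := hGc.pos_dist_of_ne hcd
  have hba : G.dist b a = G.dist a b := SimpleGraph.dist_comm
  have hdc : G.dist d c = G.dist c d := SimpleGraph.dist_comm
  -- the four vertices are distinct
  have hne_ac : a ≠ c := fun h => by rw [h, SimpleGraph.dist_self] at hca; omega
  have hne_ad : a ≠ d := fun h => by rw [h, SimpleGraph.dist_self] at hda; omega
  have hne_bc : b ≠ c := fun h => by rw [h, SimpleGraph.dist_self] at hcb; omega
  have hne_bd : b ≠ d := fun h => by rw [h, SimpleGraph.dist_self] at hdb; omega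
  -- the general position set
  have hGP : IsGPSet G {a, b, c, d} := by
    intro x hx y hy z hz hxy hyz hxz
    simp only [Set.mem_insert_iff, Set.mem_singleton_iff] at hx hy hz
    rcases hx with rfl | rfl | rfl | rfl <;> rcases hy with rfl | rfl | rfl | rfl <;>
      rcases hz with rfl | rfl | rfl | rfl <;>
      first
        | exact absurd rfl hxy
        | exact absurd rfl hyz
        | exact absurd rfl hxz
        | omega
  have hcard : ({a, b, c, d} : Set V).ncard = 4 := by
    rw [Set.ncard_insert_of_notMem (by simp [hab, hne_ac, hne_ad]) (Set.toFinite _),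
      Set.ncard_insert_of_notMem (by simp [hne_bc, hne_bd]) (Set.toFinite _),
      Set.ncard_pair hcd]
  -- conclusion
  have hmem : (4 : ℕ) ∈ {n | ∃ S : Set V, IsGPSet G S ∧ S.ncard = n} := ⟨_, hGP, hcard⟩
  have hbdd : BddAbove {n | ∃ S : Set V, IsGPSet G S ∧ S.ncard = n} := by
    refine ⟨Fintype.card V, ?_⟩
    rintro n ⟨S, -, rfl⟩
    calc S.ncard ≤ (Set.univ : Set V).ncard :=
          Set.ncard_le_ncard (Set.subset_univ S) (Set.toFinite _)
      _ = Fintype.card V := by rw [Set.ncard_univ, Nat.card_eq_fintype_card]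
  exact le_csSup hbdd hmem
end

section
/- Let G be a cactus of order n with k cycles and t pendant edges, where every pendant edge is counted as an edge incident with a vertex of degree 1. Then t ≤ n − 2k − 1. -/
open SimpleGraph

section AuxPendant

open SimpleGraph

variable {V : Type*} {G : SimpleGraph V}

private lemma support_eq_map_getVert' {u v : V} (p : G.Walk u v) :
    p.support = (List.range (p.length + 1)).map p.getVert := by
  induction p with
  | nil => simp [SimpleGraph.Walk.getVert]
  | cons h q ih =>
    rw [SimpleGraph.Walk.support_cons, SimpleGraph.Walk.length_cons, List.range_succ_eq_map]
    simp only [List.map_cons, List.map_map]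
    rw [ih]
    rfl

private lemma cycle_getVert_injOn' {u : V} {c : G.Walk u u} (hc : c.IsCycle) {i j : ℕ}
    (hi1 : 1 ≤ i) (hi2 : i ≤ c.length) (hj1 : 1 ≤ j) (hj2 : j ≤ c.length)
    (h : c.getVert i = c.getVert j) : i = j := by
  have hnd : c.support.tail.Nodup := hc.2
  have hs : c.support.tail = (List.range c.length).map (fun n => c.getVert (n + 1)) := by
    rw [support_eq_map_getVert', List.range_succ_eq_map]
    simp [List.map_map, Function.comp_def]
  rw [hs] at hnd
  have := List.inj_on_of_nodup_map hnd (x := i - 1) (y := j - 1)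
    (by simp [List.mem_range]; omega) (by simp [List.mem_range]; omega)
  have h' : c.getVert (i - 1 + 1) = c.getVert (j - 1 + 1) := by
    rw [Nat.sub_add_cancel hi1, Nat.sub_add_cancel hj1]; exact h
  have := this h'
  omega

private lemma cycle_getVert_eq_start' {u : V} {c : G.Walk u u} (hc : c.IsCycle) {i : ℕ}
    (hi : i ≤ c.length) (h : c.getVert i = u) : i = 0 ∨ i = c.length := by
  rcases Nat.eq_zero_or_pos i with h0 | h1
  · exact Or.inl h0
  · right
    exact cycle_getVert_injOn' hc h1 hi (by have := hc.three_le_length; omega) le_rfl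
      (by rw [h, SimpleGraph.Walk.getVert_length])

private lemma cycle_neighborSet_start' {u : V} {c : G.Walk u u} (hc : c.IsCycle) :
    c.toSubgraph.neighborSet u = {c.getVert 1, c.getVert (c.length - 1)} := by
  have h3 := hc.three_le_length
  ext x
  simp only [SimpleGraph.Subgraph.mem_neighborSet, Set.mem_insert_iff, Set.mem_singleton_iff]
  rw [SimpleGraph.Walk.toSubgraph_adj_iff]
  constructor
  · rintro ⟨i, hi, hlen⟩
    rw [Sym2.eq_iff] at hi
    rcases hi with ⟨h1, h2⟩ | ⟨h1, h2⟩
    · rcases cycle_getVert_eq_start' hc (le_of_lt hlen) h1 with rfl | rfl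
      · left; exact h2.symm
      · omega
    · rcases cycle_getVert_eq_start' hc (by omega) h2 with h0 | hl
      · omega
      · right; rw [← h1]; congr 1; omega
  · rintro (rfl | rfl)
    · exact ⟨0, by simp, by omega⟩
    · refine ⟨c.length - 1, ?_, by omega⟩
      have : c.length - 1 + 1 = c.length := by omega
      rw [this, SimpleGraph.Walk.getVert_length, Sym2.eq_swap]

private lemma cycle_ncard_neighborSet_start' {u : V} {c : G.Walk u u} (hc : c.IsCycle) :
    (c.toSubgraph.neighborSet u).ncard = 2 := by
  have h3 := hc.three_le_length
  rw [cycle_neighborSet_start' hc]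
  rw [Set.ncard_pair]
  exact fun h => by
    have := cycle_getVert_injOn' hc (le_refl 1) (by omega) (by omega) (by omega) h
    omega

private lemma cycle_ncard_neighborSet' {u w : V} {c : G.Walk u u} (hc : c.IsCycle)
    (hw : w ∈ c.support) : (c.toSubgraph.neighborSet w).ncard = 2 := by
  classical
  rw [← SimpleGraph.Walk.toSubgraph_rotate c hw]
  exact cycle_ncard_neighborSet_start' (hc.rotate hw)

private lemma isCycleSubgraph_toSubgraph' [Fintype V] {u : V} {c : G.Walk u u}
    (hc : c.IsCycle) : IsCycleSubgraph G c.toSubgraph := by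
  refine ⟨⟨u, c.start_mem_verts_toSubgraph⟩, Set.toFinite _, c.toSubgraph_connected.coe, ?_⟩
  intro v hv
  exact cycle_ncard_neighborSet' hc ((c.mem_verts_toSubgraph).mp hv)

private lemma connected_deleteEdge' {v w : V} (hG : G.Connected)
    (hr : (G \ fromEdgeSet {s(v, w)}).Reachable v w) :
    (G \ fromEdgeSet {s(v, w)}).Connected := by
  rw [connected_iff]
  refine ⟨fun x y => ?_, hG.nonempty⟩
  obtain ⟨p⟩ := hG x y
  induction p with
  | nil => rfl
  | @cons a b _ h q ih =>
    refine Reachable.trans ?_ ih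
    by_cases he : s(a, b) = s(v, w)
    · rw [Sym2.eq_iff] at he
      rcases he with ⟨rfl, rfl⟩ | ⟨rfl, rfl⟩
      · exact hr
      · exact hr.symm
    · exact Adj.reachable (by simp [h, he])

/-- Lift a subgraph along `G' ≤ G`. -/
private def liftSub' {G' : SimpleGraph V} (h : G' ≤ G) (C : G'.Subgraph) : G.Subgraph where
  verts := C.verts
  Adj := C.Adj
  adj_sub := fun hab => h (C.adj_sub hab)
  edge_vert := C.edge_vert
  symm := C.symm

private lemma liftSub_isCycleSubgraph' {G' : SimpleGraph V} (h : G' ≤ G) {C : G'.Subgraph}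
    (hC : IsCycleSubgraph G' C) : IsCycleSubgraph G (liftSub' h C) := hC

private lemma liftSub_inj' {G' : SimpleGraph V} (h : G' ≤ G) :
    Function.Injective (liftSub' h) := by
  intro C D hCD
  rw [SimpleGraph.Subgraph.ext_iff] at hCD ⊢
  exact hCD

private lemma liftSub_edgeSet' {G' : SimpleGraph V} (h : G' ≤ G) (C : G'.Subgraph) :
    (liftSub' h C).edgeSet = C.edgeSet := rfl

private instance finSub' {V : Type*} [Finite V] {G : SimpleGraph V} : Finite G.Subgraph :=
  Finite.of_injective (fun C : G.Subgraph => (C.verts, C.Adj))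
    (fun C D h => by
      rw [Prod.mk.injEq] at h
      rw [SimpleGraph.Subgraph.ext_iff]
      exact ⟨h.1, h.2⟩)

private lemma edges_bound' [Fintype V] :
    ∀ (m : ℕ) (G : SimpleGraph V), G.edgeSet.ncard = m → G.Connected →
      G.edgeSet.ncard + 1 ≤ Fintype.card V + numCycles G := by
  intro m
  induction m using Nat.strong_induction_on with
  | _ m ih =>
  intro G hm hG
  classical
  by_cases hac : G.IsAcyclic
  · have hT : G.IsTree := ⟨hG, hac⟩
    have h1 : G.edgeFinset.card + 1 = Fintype.card V := hT.card_edgeFinset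
    have h2 : G.edgeSet.ncard = G.edgeFinset.card := by
      rw [← SimpleGraph.coe_edgeFinset, Set.ncard_coe_finset]
    omega
  · rw [SimpleGraph.IsAcyclic] at hac
    push_neg at hac
    obtain ⟨v, c, hc⟩ := hac
    cases c with
    | nil => exact absurd hc (SimpleGraph.Walk.IsCycle.not_of_nil)
    | @cons _ b _ h q =>
      set c := SimpleGraph.Walk.cons h q with hcdef
      have he : s(v, b) ∈ c.edges := by simp [hcdef]
      set G' := G \ fromEdgeSet {s(v, b)} with hG'def
      have hle : G' ≤ G := sdiff_le
      have hreach : G.Adj v b ∧ G'.Reachable v b :=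
        (SimpleGraph.adj_and_reachable_delete_edges_iff_exists_cycle).mpr ⟨v, c, hc, he⟩
      have hG'conn : G'.Connected := connected_deleteEdge' hG hreach.2
      have hES : G'.edgeSet = G.edgeSet \ {s(v, b)} := by
        simp [hG'def, edgeSet_sdiff, edgeSet_fromEdgeSet, edgeSet_sdiff_sdiff_isDiag]
      have hmem : s(v, b) ∈ G.edgeSet := hreach.1
      have hm' : G'.edgeSet.ncard = m - 1 := by
        rw [hES, Set.ncard_diff_singleton_of_mem hmem, hm]
      have hmpos : 1 ≤ m := by
        rw [← hm]
        exact (Set.ncard_pos (Set.toFinite _)).mpr ⟨_, hmem⟩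
      have hrec := ih (m - 1) (by omega) G' hm' hG'conn
      have hcyc : numCycles G' + 1 ≤ numCycles G := by
        have hsub : insert c.toSubgraph (liftSub' hle '' {C : G'.Subgraph | IsCycleSubgraph G' C})
            ⊆ {C : G.Subgraph | IsCycleSubgraph G C} := by
          rintro C (rfl | ⟨D, hD, rfl⟩)
          · exact isCycleSubgraph_toSubgraph' hc
          · exact liftSub_isCycleSubgraph' hle hD
        have hnotmem : c.toSubgraph ∉
            liftSub' hle '' {C : G'.Subgraph | IsCycleSubgraph G' C} := by
          rintro ⟨D, _, hDeq⟩
          have : s(v, b) ∈ (liftSub' hle D).edgeSet := by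
            rw [hDeq]; exact (c.mem_edges_toSubgraph).mpr he
          rw [liftSub_edgeSet'] at this
          have := D.edgeSet_subset this
          rw [hES] at this
          exact this.2 rfl
        calc numCycles G' + 1
            = (liftSub' hle '' {C : G'.Subgraph | IsCycleSubgraph G' C}).ncard + 1 := by
              rw [Set.ncard_image_of_injective _ (liftSub_inj' hle)]; rfl
          _ = (insert c.toSubgraph
                (liftSub' hle '' {C : G'.Subgraph | IsCycleSubgraph G' C})).ncard := by
              rw [Set.ncard_insert_of_notMem hnotmem (Set.toFinite _)]
          _ ≤ numCycles G := Set.ncard_le_ncard hsub (Set.toFinite _)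
      rw [hm]
      omega

private lemma three_le_edges' [Fintype V] {C : G.Subgraph} (hC : IsCycleSubgraph G C) :
    3 ≤ C.edgeSet.ncard := by
  classical
  obtain ⟨⟨v, hv⟩, _, _, hreg⟩ := hC
  obtain ⟨x, y, hxy, hnb⟩ := Set.ncard_eq_two.mp (hreg v hv)
  have hax : C.Adj v x := by
    have : x ∈ C.neighborSet v := by rw [hnb]; simp
    exact this
  have hay : C.Adj v y := by
    have : y ∈ C.neighborSet v := by rw [hnb]; simp
    exact this
  have hxv : x ∈ C.verts := C.edge_vert hax.symm
  obtain ⟨a, b, hab, hnbx⟩ := Set.ncard_eq_two.mp (hreg x hxv)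
  have hvx : v ∈ C.neighborSet x := hax.symm
  rw [hnbx] at hvx
  obtain ⟨z, hz, hzv⟩ : ∃ z ∈ C.neighborSet x, z ≠ v := by
    rcases hvx with rfl | rfl
    · exact ⟨b, by rw [hnbx]; simp, Ne.symm hab⟩
    · exact ⟨a, by rw [hnbx]; simp, hab⟩
  have hxz : C.Adj x z := hz
  have hvx' : v ≠ x := (C.adj_sub hax).ne
  have hvy' : v ≠ y := (C.adj_sub hay).ne
  have hxz' : x ≠ z := (C.adj_sub hxz).ne
  have hsub : {s(v, x), s(v, y), s(x, z)} ⊆ C.edgeSet := by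
    intro e he
    simp only [Set.mem_insert_iff, Set.mem_singleton_iff] at he
    rcases he with rfl | rfl | rfl
    · exact hax
    · exact hay
    · exact hxz
  have hne1 : s(v, x) ∉ ({s(v, y), s(x, z)} : Set (Sym2 V)) := by
    intro hmem
    simp only [Set.mem_insert_iff, Set.mem_singleton_iff, Sym2.eq_iff] at hmem
    rcases hmem with (⟨h1, h2⟩ | ⟨h1, h2⟩) | (⟨h1, h2⟩ | ⟨h1, h2⟩) <;> subst_vars <;> simp_all
  have hne2 : s(v, y) ∉ ({s(x, z)} : Set (Sym2 V)) := by
    intro hmem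
    simp only [Set.mem_singleton_iff, Sym2.eq_iff] at hmem
    rcases hmem with ⟨h1, h2⟩ | ⟨h1, h2⟩ <;> subst_vars <;> simp_all
  have h3 : ({s(v, x), s(v, y), s(x, z)} : Set (Sym2 V)).ncard = 3 := by
    rw [Set.ncard_insert_of_notMem hne1 (Set.toFinite _),
      Set.ncard_insert_of_notMem hne2 (Set.toFinite _), Set.ncard_singleton]
  calc 3 = ({s(v, x), s(v, y), s(x, z)} : Set (Sym2 V)).ncard := h3.symm
    _ ≤ C.edgeSet.ncard := Set.ncard_le_ncard hsub (Set.toFinite _)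

private lemma pendant_not_cycle_edge' [Fintype V] {C : G.Subgraph}
    (hC : IsCycleSubgraph G C)
    {e : Sym2 V} (he : ∃ v ∈ e, vdeg G v = 1) : e ∉ C.edgeSet := by
  intro heC
  induction e with
  | _ a b =>
    obtain ⟨w, hwe, hw1⟩ := he
    have hadj : C.Adj a b := heC
    have key : ∀ u : V, u ∈ C.verts → ¬ vdeg G u = 1 := by
      intro u hu h1
      have h2 := hC.2.2.2 u hu
      have hsub := C.neighborSet_subset u
      have := Set.ncard_le_ncard hsub (Set.toFinite _)
      rw [vdeg] at h1
      omega
    rcases Sym2.mem_iff.mp hwe with rfl | rfl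
    · exact key w (C.edge_vert hadj) hw1
    · exact key w (C.edge_vert hadj.symm) hw1

end AuxPendant

/-- A cactus of order `n` with `k` cycles has at most `n - 2k - 1`
pendant edges, i.e. `t + 2k + 1 ≤ n`. -/
theorem pendant_edges_le {V : Type*} [Fintype V] (G : SimpleGraph V)
    (n k t : ℕ) (hG : IsCactus G) (hn : Fintype.card V = n)
    (hk : numCycles G = k) (ht : numPendantEdges G = t) :
    t + 2 * k + 1 ≤ n := by
  classical
  subst hn hk ht
  have hedge := edges_bound' (G.edgeSet.ncard) G rfl hG.1
  set 𝒞 : Set G.Subgraph := {C : G.Subgraph | IsCycleSubgraph G C} with h𝒞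
  set F : Finset G.Subgraph := (Set.toFinite 𝒞).toFinset with hF
  set P : Set (Sym2 V) := {e ∈ G.edgeSet | ∃ v ∈ e, vdeg G v = 1} with hP
  set Pf : Finset (Sym2 V) := (Set.toFinite P).toFinset with hPf
  set U : Finset (Sym2 V) := F.biUnion (fun C => (Set.toFinite C.edgeSet).toFinset) with hU
  have hmemF : ∀ {C : G.Subgraph}, C ∈ F ↔ IsCycleSubgraph G C := by
    intro C; rw [hF, Set.Finite.mem_toFinset]; rfl
  have hdisj : ∀ C ∈ F, ∀ D ∈ F, C ≠ D →
      Disjoint ((Set.toFinite C.edgeSet).toFinset) ((Set.toFinite D.edgeSet).toFinset) := by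
    intro C hC D hD hne
    rw [Set.Finite.disjoint_toFinset]
    exact hG.2 C D (hmemF.mp hC) (hmemF.mp hD) hne
  have hUcard : 3 * numCycles G ≤ U.card := by
    rw [hU, Finset.card_biUnion hdisj]
    have hkF : numCycles G = F.card := Set.ncard_eq_toFinset_card 𝒞 (Set.toFinite 𝒞)
    calc 3 * numCycles G = F.card • 3 := by rw [hkF, smul_eq_mul, mul_comm]
      _ ≤ ∑ C ∈ F, ((Set.toFinite C.edgeSet).toFinset).card :=
          Finset.card_nsmul_le_sum F _ 3 (fun C hC => by
            rw [← Set.ncard_eq_toFinset_card]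
            exact three_le_edges' (hmemF.mp hC))
  have hPU_disj : Disjoint Pf U := by
    rw [Finset.disjoint_left]
    intro e heP heU
    obtain ⟨C, hC, heC⟩ := Finset.mem_biUnion.mp heU
    rw [Set.Finite.mem_toFinset] at heC
    rw [hPf, Set.Finite.mem_toFinset] at heP
    exact pendant_not_cycle_edge' (hmemF.mp hC) heP.2 heC
  have hsub : Pf ∪ U ⊆ (Set.toFinite G.edgeSet).toFinset := by
    intro e he
    rw [Set.Finite.mem_toFinset]
    rcases Finset.mem_union.mp he with he | he
    · rw [hPf, Set.Finite.mem_toFinset] at he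
      exact he.1
    · obtain ⟨C, hC, heC⟩ := Finset.mem_biUnion.mp he
      rw [Set.Finite.mem_toFinset] at heC
      exact C.edgeSet_subset heC
  have hcount : Pf.card + U.card ≤ G.edgeSet.ncard := by
    rw [← Finset.card_union_of_disjoint hPU_disj,
      Set.ncard_eq_toFinset_card G.edgeSet (Set.toFinite _)]
    exact Finset.card_le_card hsub
  have htP : numPendantEdges G = Pf.card := Set.ncard_eq_toFinset_card P (Set.toFinite P)
  omega
end

section
/- For the wheel graph W_n (n ≥ 3): gp(W₃) = 4, gp(W₄) = 3, gp(W₅) = 3, and gp(W_n) = ⌊2n/3⌋ for all n ≥ 6. -/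
open SimpleGraph

/-- The wheel graph `W_n`: the cycle on `ZMod n` together with a centre `none`
adjacent to every cycle vertex. -/
def wheelGraph (n : ℕ) : SimpleGraph (Option (ZMod n)) :=
  SimpleGraph.fromRel (fun a b =>
    a = none ∨ ∃ i : ZMod n, a = some i ∧ b = some (i + 1))

section GPAux

open Finset in
/-- count of `v < m` with `v % 3 ≠ 2`. -/
lemma gpw_count_mod3 (m : ℕ) :
    ((Finset.range m).filter (fun v => v % 3 ≠ 2)).card = m - m / 3 := by
  induction m with
  | zero => simp
  | succ m ih =>
    rw [Finset.range_add_one, Finset.filter_insert]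
    by_cases h : m % 3 = 2
    · rw [if_neg (by simpa using h), ih]
      omega
    · rw [if_pos h, Finset.card_insert_of_notMem (by simp), ih]
      omega

lemma gpw_zmod_ne_zero {n k : ℕ} (h0 : 0 < k) (h : k < n) : (k : ZMod n) ≠ 0 := by
  intro h'
  have hd := (ZMod.natCast_eq_zero_iff k n).mp h'
  have := Nat.le_of_dvd h0 hd
  omega

lemma gpw_adj_none (n : ℕ) (i : ZMod n) : (wheelGraph n).Adj none (some i) := by
  rw [wheelGraph, SimpleGraph.fromRel_adj]
  exact ⟨by simp, Or.inl (Or.inl rfl)⟩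

lemma gpw_adj_some {n : ℕ} {i j : ZMod n} :
    (wheelGraph n).Adj (some i) (some j) ↔ i ≠ j ∧ (j = i + 1 ∨ i = j + 1) := by
  rw [wheelGraph, SimpleGraph.fromRel_adj]
  constructor
  · rintro ⟨hne, h | h⟩ <;>
    · rcases h with h | ⟨k, hk1, hk2⟩
      · simp at h
      · simp_all
  · rintro ⟨hne, h | h⟩
    · exact ⟨by simpa using hne, Or.inl (Or.inr ⟨i, rfl, by rw [h]⟩)⟩
    · exact ⟨by simpa using hne, Or.inr (Or.inr ⟨j, rfl, by rw [h]⟩)⟩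

lemma gpw_connected (n : ℕ) : (wheelGraph n).Connected := by
  rw [SimpleGraph.connected_iff]
  refine ⟨fun u v => ?_, ⟨none⟩⟩
  have h : ∀ w : Option (ZMod n), (wheelGraph n).Reachable none w := by
    rintro (_ | i)
    · rfl
    · exact (gpw_adj_none n i).reachable
  exact (h u).symm.trans (h v)

lemma gpw_dist_adj {n : ℕ} {u v : Option (ZMod n)} (h : (wheelGraph n).Adj u v) :
    (wheelGraph n).dist u v = 1 := SimpleGraph.dist_eq_one_iff_adj.mpr h

lemma gpw_dist_two {n : ℕ} {u v : Option (ZMod n)} (hne : u ≠ v)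
    (hna : ¬ (wheelGraph n).Adj u v) : (wheelGraph n).dist u v = 2 := by
  obtain ⟨i, rfl⟩ : ∃ i, u = some i := by
    cases u with
    | none => cases v with
      | none => exact absurd rfl hne
      | some j => exact absurd (gpw_adj_none n j) hna
    | some i => exact ⟨i, rfl⟩
  obtain ⟨j, rfl⟩ : ∃ j, v = some j := by
    cases v with
    | none => exact absurd (gpw_adj_none n i).symm hna
    | some j => exact ⟨j, rfl⟩
  have hle : (wheelGraph n).dist (some i) (some j) ≤ 2 := by
    calc (wheelGraph n).dist (some i) (some j)
        ≤ (SimpleGraph.Walk.cons (gpw_adj_none n i).symm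
            (SimpleGraph.Walk.cons (gpw_adj_none n j) SimpleGraph.Walk.nil)).length :=
          SimpleGraph.dist_le _
      _ = 2 := by simp
  have hpos := (gpw_connected n).pos_dist_of_ne hne
  have h1 : (wheelGraph n).dist (some i) (some j) ≠ 1 := fun h =>
    hna (SimpleGraph.dist_eq_one_iff_adj.mp h)
  omega

lemma gpw_dist_le_two {n : ℕ} (u v : Option (ZMod n)) (hne : u ≠ v) :
    (wheelGraph n).dist u v ≤ 2 := by
  by_cases h : (wheelGraph n).Adj u v
  · rw [gpw_dist_adj h]; omega
  · rw [gpw_dist_two hne h]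

/-- From pairwise adjacency data get a consecutive triple pattern. -/
lemma gpw_mid {n : ℕ} {a b c : ZMod n} (h1 : b = a + 1 ∨ a = b + 1)
    (h2 : c = b + 1 ∨ b = c + 1) (hac : a ≠ c) :
    (b = a + 1 ∧ c = b + 1) ∨ (b = c + 1 ∧ a = b + 1) := by
  rcases h1 with h1 | h1 <;> rcases h2 with h2 | h2
  · exact Or.inl ⟨h1, h2⟩
  · exact absurd (add_right_cancel (h1 ▸ h2 : a + 1 = c + 1)) hac
  · exact absurd ((h1.trans h2.symm : a = c)) hac
  · exact Or.inr ⟨h2, h1⟩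

/-- A GP set contains no three consecutive rim vertices (n ≥ 4). -/
lemma gpw_no_triple {n : ℕ} (hn : 4 ≤ n) {S : Set (Option (ZMod n))}
    (hS : IsGPSet (wheelGraph n) S) (i : ZMod n) :
    ¬ (some i ∈ S ∧ some (i + 1) ∈ S ∧ some (i + 2) ∈ S) := by
  rintro ⟨h1, h2, h3⟩
  have e1 : (1 : ZMod n) ≠ 0 := by simpa using gpw_zmod_ne_zero (n := n) one_pos (by omega)
  have e2 : (2 : ZMod n) ≠ 0 := by
    have := gpw_zmod_ne_zero (n := n) (k := 2) (by omega) (by omega)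
    simpa using this
  have e3 : (3 : ZMod n) ≠ 0 := by
    have := gpw_zmod_ne_zero (n := n) (k := 3) (by omega) (by omega)
    simpa using this
  have hne12 : i ≠ i + 1 := fun h => e1 (by linear_combination -h)
  have hne23 : i + 1 ≠ i + 2 := fun h => e1 (by linear_combination -h)
  have hne13 : i ≠ i + 2 := fun h => e2 (by linear_combination -h)
  have hna : ¬ (wheelGraph n).Adj (some i) (some (i + 2)) := by
    rw [gpw_adj_some]
    rintro ⟨-, h | h⟩
    · exact e1 (by linear_combination h)
    · exact e3 (by linear_combination -h)
  have hadj1 : (wheelGraph n).Adj (some i) (some (i + 1)) :=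
    gpw_adj_some.mpr ⟨hne12, Or.inl rfl⟩
  have hadj2 : (wheelGraph n).Adj (some (i + 1)) (some (i + 2)) :=
    gpw_adj_some.mpr ⟨hne23, Or.inl (by ring)⟩
  have := hS _ h1 _ h2 _ h3 (by simpa using hne12) (by simpa using hne23)
    (by simpa using hne13)
  rw [gpw_dist_two (by simpa using hne13) hna, gpw_dist_adj hadj1, gpw_dist_adj hadj2] at this
  exact this rfl

/-- Window-counting bound: a subset of `ZMod n` with no 3 consecutive elements
has at most `2n/3` elements. -/
lemma gpw_window_bound {n : ℕ} (hn : 3 ≤ n) (T : Finset (ZMod n))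
    (hT : ∀ i : ZMod n, ¬ (i ∈ T ∧ i + 1 ∈ T ∧ i + 2 ∈ T)) :
    3 * T.card ≤ 2 * n := by
  haveI : NeZero n := ⟨by omega⟩
  classical
  have e1 : (1 : ZMod n) ≠ 0 := by simpa using gpw_zmod_ne_zero (n := n) one_pos (by omega)
  have e2 : (2 : ZMod n) ≠ 0 := by
    have := gpw_zmod_ne_zero (n := n) (k := 2) (by omega) (by omega)
    simpa using this
  have key : ∑ i : ZMod n, (T.filter fun t => t = i ∨ t = i + 1 ∨ t = i + 2).card
      = 3 * T.card := by
    have swap : ∑ i : ZMod n, (T.filter fun t => t = i ∨ t = i + 1 ∨ t = i + 2).card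
        = ∑ t ∈ T, (Finset.univ.filter
            fun i : ZMod n => t = i ∨ t = i + 1 ∨ t = i + 2).card := by
      simp only [Finset.card_filter]
      rw [Finset.sum_comm]
    rw [swap]
    have hval : ∀ t ∈ T, (Finset.univ.filter
        fun i : ZMod n => t = i ∨ t = i + 1 ∨ t = i + 2).card = 3 := by
      intro t _
      have heq : (Finset.univ.filter
          fun i : ZMod n => t = i ∨ t = i + 1 ∨ t = i + 2)
          = {t, t - 1, t - 2} := by
        ext i
        simp only [Finset.mem_filter, Finset.mem_univ, true_and, Finset.mem_insert,
          Finset.mem_singleton]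
        constructor
        · rintro (h | h | h)
          · exact Or.inl h.symm
          · exact Or.inr (Or.inl (by linear_combination -h))
          · exact Or.inr (Or.inr (by linear_combination -h))
        · rintro (rfl | rfl | rfl)
          · exact Or.inl rfl
          · exact Or.inr (Or.inl (by ring))
          · exact Or.inr (Or.inr (by ring))
      rw [heq]
      rw [Finset.card_insert_of_notMem, Finset.card_insert_of_notMem,
        Finset.card_singleton]
      · intro h
        rw [Finset.mem_singleton] at h
        exact e1 (by linear_combination h)
      · intro h
        rcases Finset.mem_insert.mp h with h | h
        · exact e1 (by linear_combination h)
        · rw [Finset.mem_singleton] at h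
          exact e2 (by linear_combination h)
    rw [Finset.sum_congr rfl hval]
    simp [mul_comm]
  have bound : ∀ i : ZMod n,
      (T.filter fun t => t = i ∨ t = i + 1 ∨ t = i + 2).card ≤ 2 := by
    intro i
    by_contra hc
    push_neg at hc
    have hsub : (T.filter fun t => t = i ∨ t = i + 1 ∨ t = i + 2)
        ⊆ {i, i + 1, i + 2} := by
      intro t ht
      rw [Finset.mem_filter] at ht
      simpa using ht.2
    have hc3 : ({i, i + 1, i + 2} : Finset (ZMod n)).card ≤ 3 := by
      apply le_trans (Finset.card_insert_le _ _)
      have := Finset.card_insert_le (i + 1) ({i + 2} : Finset (ZMod n))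
      simp at this ⊢
      omega
    have heq := Finset.eq_of_subset_of_card_le hsub (by omega)
    have hmem : ∀ x ∈ ({i, i + 1, i + 2} : Finset (ZMod n)), x ∈ T := by
      intro x hx
      rw [← heq] at hx
      exact (Finset.mem_filter.mp hx).1
    exact hT i ⟨hmem i (by simp), hmem (i + 1) (by simp), hmem (i + 2) (by simp)⟩
  have total : ∑ i : ZMod n, (T.filter fun t => t = i ∨ t = i + 1 ∨ t = i + 2).card
      ≤ 2 * n := by
    calc ∑ i : ZMod n, (T.filter fun t => t = i ∨ t = i + 1 ∨ t = i + 2).card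
        ≤ ∑ _i : ZMod n, 2 := Finset.sum_le_sum (fun i _ => bound i)
      _ = 2 * n := by simp [ZMod.card, mul_comm]
  omega

/-- Upper bound: any GP set of the wheel `W_n`, `n ≥ 4`, has at most
`max 3 (2n/3)` elements. -/
lemma gpw_upper {n : ℕ} (hn : 4 ≤ n) {S : Set (Option (ZMod n))}
    (hS : IsGPSet (wheelGraph n) S) : S.ncard ≤ max 3 (2 * n / 3) := by
  haveI : NeZero n := ⟨by omega⟩
  classical
  by_cases hnone : none ∈ S
  · -- with the centre: at most 3
    refine le_trans ?_ (le_max_left _ _)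
    set R : Set (ZMod n) := {i | some i ∈ S} with hR
    have hadj : ∀ a ∈ R, ∀ b ∈ R, a ≠ b → (wheelGraph n).Adj (some a) (some b) := by
      intro a ha b hb hab
      by_contra hna
      have := hS _ ha _ hnone _ hb (by simp) (by simp) (by simpa using hab)
      rw [gpw_dist_two (by simpa using hab) hna,
        gpw_dist_adj (gpw_adj_none n a).symm, gpw_dist_adj (gpw_adj_none n b)] at this
      exact this rfl
    have hR2 : R.ncard ≤ 2 := by
      by_contra hc
      push_neg at hc
      obtain ⟨a, b, c, ha, hb, hc', hab, hac, hbc⟩ :=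
        (Set.two_lt_ncard_iff (Set.toFinite R)).mp hc
      have h1 := (gpw_adj_some.mp (hadj a ha b hb hab)).2
      have h2 := (gpw_adj_some.mp (hadj b hb c hc' hbc)).2
      rcases gpw_mid h1 h2 hac with ⟨hb1, hc1⟩ | ⟨hb1, ha1⟩
      · exact gpw_no_triple hn hS a ⟨ha, hb1 ▸ hb, by rw [hb1] at hc1; rw [show a + 2 = a + 1 + 1 by ring, ← hc1]; exact hc'⟩
      · exact gpw_no_triple hn hS c ⟨hc', hb1 ▸ hb, by rw [hb1] at ha1; rw [show c + 2 = c + 1 + 1 by ring, ← ha1]; exact ha⟩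
    have hsub : S ⊆ insert none (some '' R) := by
      rintro (_ | i) hx
      · exact Set.mem_insert _ _
      · exact Set.mem_insert_of_mem _ ⟨i, hx, rfl⟩
    calc S.ncard ≤ (insert none (some '' R)).ncard :=
          Set.ncard_le_ncard hsub (Set.toFinite _)
      _ ≤ (some '' R).ncard + 1 := Set.ncard_insert_le _ _
      _ ≤ 2 + 1 := by
          have := Set.ncard_image_of_injective R (Option.some_injective (ZMod n))
          omega
      _ = 3 := rfl
  · -- without the centre: at most 2n/3
    refine le_trans ?_ (le_max_right _ _)
    set R : Set (ZMod n) := {i | some i ∈ S} with hR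
    have hSR : S = some '' R := by
      ext x
      cases x with
      | none => simp [hnone]
      | some i => simp [hR]
    have hcard : S.ncard = R.ncard :=
      hSR ▸ Set.ncard_image_of_injective R (Option.some_injective (ZMod n))
    rw [hcard]
    have hfin : R.Finite := Set.toFinite R
    have hTcard : R.ncard = hfin.toFinset.card := Set.ncard_eq_toFinset_card R hfin
    rw [hTcard]
    have h3 := gpw_window_bound (by omega) hfin.toFinset (by
      intro i hi
      simp only [Set.Finite.mem_toFinset] at hi
      exact gpw_no_triple hn hS i ⟨hi.1, hi.2.1, hi.2.2⟩)
    omega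

/-- Lower bound witness containing the centre: a GP set of size 3 (n ≥ 4). -/
lemma gpw_lower_center {n : ℕ} (hn : 4 ≤ n) :
    ∃ S : Set (Option (ZMod n)), IsGPSet (wheelGraph n) S ∧ S.ncard = 3 := by
  haveI : NeZero n := ⟨by omega⟩
  have e1 : (1 : ZMod n) ≠ 0 := by simpa using gpw_zmod_ne_zero (n := n) one_pos (by omega)
  refine ⟨{none, some 0, some 1}, ?_, ?_⟩
  · have hd : ∀ x ∈ ({none, some 0, some 1} : Set (Option (ZMod n))),
        ∀ z ∈ ({none, some 0, some 1} : Set (Option (ZMod n))), x ≠ z →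
        (wheelGraph n).dist x z = 1 := by
      rintro x (rfl | rfl | rfl) z (rfl | rfl | rfl) hxz <;>
        first
        | exact absurd rfl hxz
        | exact gpw_dist_adj (gpw_adj_none n _)
        | exact gpw_dist_adj (gpw_adj_none n _).symm
        | exact gpw_dist_adj (gpw_adj_some.mpr ⟨fun h => e1 (by simpa using h.symm), Or.inl (by ring)⟩)
        | exact gpw_dist_adj (gpw_adj_some.mpr ⟨fun h => e1 (by simpa using h), Or.inr (by ring)⟩)
    intro x hx y hy z hz hxy hyz hxz
    rw [hd x hx z hz hxz, hd x hx y hy hxy, hd y hy z hz hyz]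
    omega
  · rw [Set.ncard_insert_of_notMem (by simp), Set.ncard_insert_of_notMem
      (by simpa using fun h => e1 (by simpa using h.symm)), Set.ncard_singleton]

/-- Lower bound witness avoiding the centre: a GP set of size `2n/3` (n ≥ 4). -/
lemma gpw_lower_rim {n : ℕ} (hn : 4 ≤ n) :
    ∃ S : Set (Option (ZMod n)), IsGPSet (wheelGraph n) S ∧ S.ncard = 2 * n / 3 := by
  haveI : NeZero n := ⟨by omega⟩
  classical
  set RF : Finset (ZMod n) :=
    Finset.univ.filter (fun i => i.val % 3 ≠ 2 ∧ i.val ≠ n - 1) with hRF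
  have hmemRF : ∀ i : ZMod n, i ∈ RF ↔ i.val % 3 ≠ 2 ∧ i.val ≠ n - 1 := by
    intro i; simp [hRF]
  -- no three consecutive elements in RF
  have hnt : ∀ i : ZMod n, ¬ (i ∈ RF ∧ i + 1 ∈ RF ∧ i + 2 ∈ RF) := by
    rintro i ⟨h1, h2, h3⟩
    rw [hmemRF] at h1 h2 h3
    have hv := i.val_lt
    have hvone : (1 : ZMod n).val = 1 := ZMod.val_one'' (by omega)
    have hi1 : (i + 1).val = i.val + 1 := by
      rw [ZMod.val_add, hvone, Nat.mod_eq_of_lt (by omega)]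
    have hi2 : (i + 2).val = i.val + 2 := by
      have : i + 2 = (i + 1) + 1 := by ring
      rw [this, ZMod.val_add, hvone, hi1, Nat.mod_eq_of_lt (by omega)]
    rw [hi1] at h2
    rw [hi2] at h3
    omega
  -- the set
  refine ⟨some '' (RF : Set (ZMod n)), ?_, ?_⟩
  · intro x hx y hy z hz hxy hyz hxz heq
    obtain ⟨a, ha, rfl⟩ := hx
    obtain ⟨b, hb, rfl⟩ := hy
    obtain ⟨c, hc, rfl⟩ := hz
    have hab : a ≠ b := fun h => hxy (by rw [h])
    have hbc : b ≠ c := fun h => hyz (by rw [h])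
    have hac : a ≠ c := fun h => hxz (by rw [h])
    have d1 := (gpw_connected n).pos_dist_of_ne hxy
    have d2 := (gpw_connected n).pos_dist_of_ne hyz
    have d3 := gpw_dist_le_two _ _ hxz
    have hxy1 : (wheelGraph n).dist (some a) (some b) = 1 := by omega
    have hyz1 : (wheelGraph n).dist (some b) (some c) = 1 := by omega
    have hxz2 : (wheelGraph n).dist (some a) (some c) = 2 := by omega
    have hadj1 := (gpw_adj_some.mp (SimpleGraph.dist_eq_one_iff_adj.mp hxy1)).2
    have hadj2 := (gpw_adj_some.mp (SimpleGraph.dist_eq_one_iff_adj.mp hyz1)).2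
    rcases gpw_mid hadj1 hadj2 hac with ⟨hb1, hc1⟩ | ⟨hb1, ha1⟩
    · refine hnt a ⟨by simpa using ha, ?_, ?_⟩
      · rw [← hb1]; simpa using hb
      · rw [hb1] at hc1
        rw [show a + 2 = a + 1 + 1 by ring, ← hc1]; simpa using hc
    · refine hnt c ⟨by simpa using hc, ?_, ?_⟩
      · rw [← hb1]; simpa using hb
      · rw [hb1] at ha1
        rw [show c + 2 = c + 1 + 1 by ring, ← ha1]; simpa using ha
  · rw [Set.ncard_image_of_injective _ (Option.some_injective (ZMod n)),
      Set.ncard_coe_finset]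
    -- count RF
    have hbij : RF.card = ((Finset.range (n - 1)).filter (fun v => v % 3 ≠ 2)).card := by
      apply Finset.card_bij (fun i _ => i.val)
      · intro i hi
        rw [hmemRF] at hi
        have := i.val_lt
        simp only [Finset.mem_filter, Finset.mem_range]
        exact ⟨by omega, hi.1⟩
      · intro a _ b _ h
        exact ZMod.val_injective n h
      · intro v hv
        simp only [Finset.mem_filter, Finset.mem_range] at hv
        refine ⟨(v : ZMod n), ?_, ?_⟩
        · rw [hmemRF, ZMod.val_cast_of_lt (by omega)]
          exact ⟨hv.2, by omega⟩
        · rw [ZMod.val_cast_of_lt (by omega)]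
    rw [hbij, gpw_count_mod3]
    omega

/-- Characterisation of `gpNumber` via a max witness and an upper bound. -/
lemma gpw_gpNumber_eq {V : Type*} (G : SimpleGraph V) (m : ℕ)
    (h1 : ∃ S : Set V, IsGPSet G S ∧ S.ncard = m)
    (h2 : ∀ S : Set V, IsGPSet G S → S.ncard ≤ m) : gpNumber G = m := by
  have hub : ∀ k ∈ {k | ∃ S : Set V, IsGPSet G S ∧ S.ncard = k}, k ≤ m := by
    rintro k ⟨S, hS, rfl⟩
    exact h2 S hS
  refine le_antisymm (csSup_le ⟨m, h1⟩ hub) (le_csSup ⟨m, hub⟩ h1)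

end GPAux

/-- `gp(W₃) = 4`, `gp(W₄) = 3`, `gp(W₅) = 3`, and
`gp(W_n) = ⌊2n/3⌋` for `n ≥ 6`. -/


theorem gp_wheel :
    gpNumber (wheelGraph 3) = 4 ∧ gpNumber (wheelGraph 4) = 3 ∧
    gpNumber (wheelGraph 5) = 3 ∧
    ∀ n : ℕ, 6 ≤ n → gpNumber (wheelGraph n) = 2 * n / 3 := by
  refine ⟨?_, ?_, ?_, ?_⟩
  · -- n = 3
    apply gpw_gpNumber_eq
    · refine ⟨Set.univ, ?_, ?_⟩
      · have hadj : ∀ u v : Option (ZMod 3), u ≠ v → (wheelGraph 3).Adj u v := by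
          have key : ∀ i j : ZMod 3, i ≠ j → j = i + 1 ∨ i = j + 1 := by decide
          rintro (_ | i) (_ | j) huv
          · exact absurd rfl huv
          · exact gpw_adj_none 3 j
          · exact (gpw_adj_none 3 i).symm
          · exact gpw_adj_some.mpr ⟨by simpa using huv, key i j (by simpa using huv)⟩
        intro x _ y _ z _ hxy hyz hxz
        rw [gpw_dist_adj (hadj x z hxz), gpw_dist_adj (hadj x y hxy),
          gpw_dist_adj (hadj y z hyz)]
        omega
      · rw [Set.ncard_univ]
        simp [Nat.card_eq_fintype_card]
    · intro S _
      calc S.ncard ≤ (Set.univ : Set (Option (ZMod 3))).ncard :=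
            Set.ncard_le_ncard (Set.subset_univ S) (Set.toFinite _)
        _ = 4 := by rw [Set.ncard_univ]; simp [Nat.card_eq_fintype_card]
  · -- n = 4
    apply gpw_gpNumber_eq _ _ (gpw_lower_center (by norm_num))
    intro S hS
    have := gpw_upper (by norm_num) hS
    simpa using this
  · -- n = 5
    apply gpw_gpNumber_eq _ _ (gpw_lower_center (by norm_num))
    intro S hS
    have := gpw_upper (by norm_num) hS
    simpa using this
  · -- n ≥ 6
    intro n hn
    apply gpw_gpNumber_eq _ _ (gpw_lower_rim (by omega))
    intro S hS
    have h := gpw_upper (by omega) hS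
    rwa [max_eq_right (by omega : 3 ≤ 2 * n / 3)] at h
end

section
/- For n ≥ 6, no gp-set (maximum-cardinality general position set) of the wheel graph W_n contains the center vertex of W_n. -/
open SimpleGraph

section WheelAux

open SimpleGraph

variable {n : ℕ}

lemma wheel_adj_none_some (i : ZMod n) : (wheelGraph n).Adj none (some i) := by
  simp [wheelGraph, SimpleGraph.fromRel_adj]

lemma wheel_adj_some_some {i j : ZMod n} :
    (wheelGraph n).Adj (some i) (some j) ↔ i ≠ j ∧ (j = i + 1 ∨ i = j + 1) := by
  constructor
  · intro h
    rw [wheelGraph, SimpleGraph.fromRel_adj] at h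
    obtain ⟨hne, h | h⟩ := h
    · rcases h with h | ⟨k, hk1, hk2⟩
      · exact absurd h (by simp)
      · refine ⟨by simpa using hne, Or.inl ?_⟩
        obtain rfl : i = k := by simpa using hk1
        simpa using hk2
    · rcases h with h | ⟨k, hk1, hk2⟩
      · exact absurd h (by simp)
      · refine ⟨by simpa using hne, Or.inr ?_⟩
        obtain rfl : j = k := by simpa using hk1
        simpa using hk2
  · rintro ⟨hne, h | h⟩
    · rw [wheelGraph, SimpleGraph.fromRel_adj]
      exact ⟨by simpa using hne, Or.inl (Or.inr ⟨i, rfl, by rw [h]⟩)⟩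
    · rw [wheelGraph, SimpleGraph.fromRel_adj]
      exact ⟨by simpa using hne, Or.inr (Or.inr ⟨j, rfl, by rw [h]⟩)⟩

lemma wheel_dist_none_some (i : ZMod n) : (wheelGraph n).dist none (some i) = 1 :=
  SimpleGraph.dist_eq_one_iff_adj.mpr (wheel_adj_none_some i)

lemma wheel_dist_some_none (i : ZMod n) : (wheelGraph n).dist (some i) none = 1 :=
  SimpleGraph.dist_eq_one_iff_adj.mpr (wheel_adj_none_some i).symm

lemma wheel_walk_some_some (i j : ZMod n) :
    ∃ p : (wheelGraph n).Walk (some i) (some j), p.length = 2 :=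
  ⟨Walk.cons (wheel_adj_none_some i).symm (Walk.cons (wheel_adj_none_some j) Walk.nil), rfl⟩

lemma wheel_dist_some_some_le (i j : ZMod n) :
    (wheelGraph n).dist (some i) (some j) ≤ 2 := by
  obtain ⟨p, hp⟩ := wheel_walk_some_some (n := n) i j
  simpa [hp] using SimpleGraph.dist_le p

lemma wheel_dist_some_some_eq_two {i j : ZMod n} (hij : i ≠ j)
    (hna : ¬ (wheelGraph n).Adj (some i) (some j)) :
    (wheelGraph n).dist (some i) (some j) = 2 := by
  have hle := wheel_dist_some_some_le (n := n) i j
  have h0 : (wheelGraph n).dist (some i) (some j) ≠ 0 := by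
    rw [SimpleGraph.dist_ne_zero_iff_ne_and_reachable]
    exact ⟨by simpa using hij, ⟨(wheel_walk_some_some i j).choose⟩⟩
  have h1 : (wheelGraph n).dist (some i) (some j) ≠ 1 := by
    simpa [SimpleGraph.dist_eq_one_iff_adj] using hna
  omega

end WheelAux

section WheelMain

open SimpleGraph

lemma zmod_cast_ne_zero {n : ℕ} (hn : 6 ≤ n) {k : ℕ} (hk1 : 0 < k) (hk2 : k < 6) :
    ((k : ZMod n) ≠ 0) := by
  intro h
  rw [ZMod.natCast_eq_zero_iff] at h
  have := Nat.le_of_dvd hk1 h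
  omega

theorem center_notMem_gpSet_wheel' (n : ℕ) (hn : 6 ≤ n)
    (S : Set (Option (ZMod n))) (hS : IsGPMaxSet (wheelGraph n) S) :
    none ∉ S := by
  haveI : NeZero n := ⟨by omega⟩
  intro hnone
  obtain ⟨hgp, hcard⟩ := hS
  have h1 : (1 : ZMod n) ≠ 0 := by exact_mod_cast zmod_cast_ne_zero hn one_pos (by norm_num)
  have h2 : (2 : ZMod n) ≠ 0 := by exact_mod_cast zmod_cast_ne_zero hn two_pos (by norm_num)
  have h3 : (3 : ZMod n) ≠ 0 := by exact_mod_cast zmod_cast_ne_zero hn (by norm_num) (by norm_num)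
  have h4 : (4 : ZMod n) ≠ 0 := by exact_mod_cast zmod_cast_ne_zero hn (by norm_num) (by norm_num)
  have h5 : (5 : ZMod n) ≠ 0 := by exact_mod_cast zmod_cast_ne_zero hn (by norm_num) (by norm_num)
  -- Step 1: any two rim vertices of S differ by ±1
  have key : ∀ i j : ZMod n, some i ∈ S → some j ∈ S → i ≠ j →
      (j - i = 1 ∨ i - j = 1) := by
    intro i j hi hj hij
    by_contra hc
    push_neg at hc
    have hna : ¬ (wheelGraph n).Adj (some i) (some j) := by
      rw [wheel_adj_some_some]
      rintro ⟨-, h | h⟩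
      · exact hc.1 (by linear_combination h)
      · exact hc.2 (by linear_combination h)
    have := hgp (some i) hi none hnone (some j) hj (by simp) (by simp) (by simp [hij])
    rw [wheel_dist_some_some_eq_two hij hna, wheel_dist_some_none, wheel_dist_none_some] at this
    exact this rfl
  -- Step 2: at most two rim vertices in S
  have hR : {v ∈ S | v ≠ none}.ncard ≤ 2 := by
    by_contra hcon
    push_neg at hcon
    rw [Set.two_lt_ncard_iff (Set.toFinite _)] at hcon
    obtain ⟨a, b, c, ⟨ha, ha'⟩, ⟨hb, hb'⟩, ⟨hcS, hc'⟩, hab, hac, hbc⟩ := hcon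
    obtain ⟨i, rfl⟩ := Option.ne_none_iff_exists'.mp ha'
    obtain ⟨j, rfl⟩ := Option.ne_none_iff_exists'.mp hb'
    obtain ⟨k, rfl⟩ := Option.ne_none_iff_exists'.mp hc'
    have hij : i ≠ j := by simpa using hab
    have hik : i ≠ k := by simpa using hac
    have hjk : j ≠ k := by simpa using hbc
    rcases key i j ha hb hij with e1 | e1 <;>
      rcases key j k hb hcS hjk with e2 | e2 <;>
      rcases key i k ha hcS hik with e3 | e3 <;>
      first
        | exact h1 (by linear_combination -e1 - e2 + e3)
        | exact h1 (by linear_combination e1 - e2 - e3)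
        | exact h1 (by linear_combination -e1 + e2 - e3)
        | exact h3 (by linear_combination -e1 - e2 - e3)
  have hsub : S ⊆ insert none {v ∈ S | v ≠ none} := by
    intro v hv
    by_cases h : v = none
    · simp [h]
    · exact Set.mem_insert_of_mem _ ⟨hv, h⟩
  have hS3 : S.ncard ≤ 3 := by
    have := Set.ncard_le_ncard hsub (Set.toFinite _)
    have := Set.ncard_insert_le none {v ∈ S | v ≠ none}
    omega
  -- Step 3: a general position set of size 4
  -- inequalities between the four chosen values
  have N01 : (0 : ZMod n) ≠ 1 := fun h => h1 (by linear_combination -h)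
  have N03 : (0 : ZMod n) ≠ 3 := fun h => h3 (by linear_combination -h)
  have N04 : (0 : ZMod n) ≠ 4 := fun h => h4 (by linear_combination -h)
  have N13 : (1 : ZMod n) ≠ 3 := fun h => h2 (by linear_combination -h)
  have N14 : (1 : ZMod n) ≠ 4 := fun h => h3 (by linear_combination -h)
  have N34 : (3 : ZMod n) ≠ 4 := fun h => h1 (by linear_combination -h)
  have A01 : (wheelGraph n).Adj (some 0) (some 1) :=
    wheel_adj_some_some.mpr ⟨N01, Or.inl (by ring)⟩
  have A34 : (wheelGraph n).Adj (some 3) (some 4) :=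
    wheel_adj_some_some.mpr ⟨N34, Or.inl (by ring)⟩
  have D01 : (wheelGraph n).dist (some 0) (some 1) = 1 := dist_eq_one_iff_adj.mpr A01
  have D10 : (wheelGraph n).dist (some 1) (some 0) = 1 := dist_eq_one_iff_adj.mpr A01.symm
  have D34 : (wheelGraph n).dist (some 3) (some 4) = 1 := dist_eq_one_iff_adj.mpr A34
  have D43 : (wheelGraph n).dist (some 4) (some 3) = 1 := dist_eq_one_iff_adj.mpr A34.symm
  have nadj : ∀ i j : ZMod n, (j = i + 1 → False) → (i = j + 1 → False) →
      ¬ (wheelGraph n).Adj (some i) (some j) := by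
    intro i j hx hy hadj
    rcases (wheel_adj_some_some.mp hadj).2 with h | h
    · exact hx h
    · exact hy h
  have D03 : (wheelGraph n).dist (some 0) (some 3) = 2 :=
    wheel_dist_some_some_eq_two N03 (nadj _ _ (fun h => h2 (by linear_combination h))
      (fun h => h4 (by linear_combination -h)))
  have D30 : (wheelGraph n).dist (some 3) (some 0) = 2 :=
    wheel_dist_some_some_eq_two N03.symm (nadj _ _ (fun h => h4 (by linear_combination -h))
      (fun h => h2 (by linear_combination h)))
  have D04 : (wheelGraph n).dist (some 0) (some 4) = 2 :=
    wheel_dist_some_some_eq_two N04 (nadj _ _ (fun h => h3 (by linear_combination h))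
      (fun h => h5 (by linear_combination -h)))
  have D40 : (wheelGraph n).dist (some 4) (some 0) = 2 :=
    wheel_dist_some_some_eq_two N04.symm (nadj _ _ (fun h => h5 (by linear_combination -h))
      (fun h => h3 (by linear_combination h)))
  have D13 : (wheelGraph n).dist (some 1) (some 3) = 2 :=
    wheel_dist_some_some_eq_two N13 (nadj _ _ (fun h => h1 (by linear_combination h))
      (fun h => h3 (by linear_combination -h)))
  have D31 : (wheelGraph n).dist (some 3) (some 1) = 2 :=
    wheel_dist_some_some_eq_two N13.symm (nadj _ _ (fun h => h3 (by linear_combination -h))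
      (fun h => h1 (by linear_combination h)))
  have D14 : (wheelGraph n).dist (some 1) (some 4) = 2 :=
    wheel_dist_some_some_eq_two N14 (nadj _ _ (fun h => h2 (by linear_combination h))
      (fun h => h4 (by linear_combination -h)))
  have D41 : (wheelGraph n).dist (some 4) (some 1) = 2 :=
    wheel_dist_some_some_eq_two N14.symm (nadj _ _ (fun h => h4 (by linear_combination -h))
      (fun h => h2 (by linear_combination h)))
  have hgpT : IsGPSet (wheelGraph n)
      ({some 0, some 1, some 3, some 4} : Set (Option (ZMod n))) := by
    intro x hx y hy z hz hxy hyz hxz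
    simp only [Set.mem_insert_iff, Set.mem_singleton_iff] at hx hy hz
    rcases hx with rfl | rfl | rfl | rfl <;>
      rcases hy with rfl | rfl | rfl | rfl <;>
      rcases hz with rfl | rfl | rfl | rfl <;>
      first
        | exact (hxy rfl).elim
        | exact (hyz rfl).elim
        | exact (hxz rfl).elim
        | (simp only [D01, D10, D34, D43, D03, D30, D04, D40, D13, D31, D14, D41]; omega)
  have hT4 : ({some 0, some 1, some 3, some 4} : Set (Option (ZMod n))).ncard = 4 := by
    rw [Set.ncard_insert_of_notMem (by simp [N01, N03, N04]),
      Set.ncard_insert_of_notMem (by simp [N13, N14]),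
      Set.ncard_insert_of_notMem (by simp [N34]), Set.ncard_singleton]
  have hub : BddAbove {m | ∃ S : Set (Option (ZMod n)),
      IsGPSet (wheelGraph n) S ∧ S.ncard = m} := by
    refine ⟨Nat.card (Option (ZMod n)), ?_⟩
    rintro m ⟨S', -, rfl⟩
    simpa [Set.ncard_univ] using Set.ncard_le_ncard (Set.subset_univ S') Set.finite_univ
  have h4' : 4 ≤ gpNumber (wheelGraph n) :=
    le_csSup hub ⟨{some 0, some 1, some 3, some 4}, hgpT, hT4⟩
  omega

end WheelMain

/-- For `n ≥ 6` no gp-set of the wheel `W_n` contains the centre. -/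
theorem center_not_mem_gpSet_wheel (n : ℕ) (hn : 6 ≤ n)
    (S : Set (Option (ZMod n))) (hS : IsGPMaxSet (wheelGraph n) S) :
    none ∉ S :=
  center_notMem_gpSet_wheel' n hn S hS
end

section
/- For n ≥ 6, if S is a gp-set of the wheel graph W_n, then S is contained in the vertex set of the outer cycle C_n, and the subgraph of C_n induced by S contains no path on three vertices (i.e., it is a disjoint union of copies of K₁ and K₂). -/
open SimpleGraph

section WheelAux

variable {n : ℕ}

lemma wheel_adj_some {a b : ZMod n} :
    (wheelGraph n).Adj (some a) (some b) ↔ a ≠ b ∧ (b = a + 1 ∨ a = b + 1) := by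
  simp only [wheelGraph, SimpleGraph.fromRel_adj, ne_eq, Option.some.injEq,
    reduceCtorEq, false_or, Option.some.injEq]
  constructor
  · rintro ⟨h, (⟨i, hi, hb⟩ | ⟨i, hi, hb⟩)⟩
    · exact ⟨h, Or.inl (by subst hi; exact hb)⟩
    · exact ⟨h, Or.inr (by subst hi; exact hb)⟩
  · rintro ⟨h, (hb | hb)⟩
    · exact ⟨h, Or.inl ⟨a, rfl, hb⟩⟩
    · exact ⟨h, Or.inr ⟨b, rfl, hb⟩⟩

lemma wheel_adj_none {a : ZMod n} : (wheelGraph n).Adj none (some a) := by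
  unfold wheelGraph
  rw [SimpleGraph.fromRel_adj]
  exact ⟨by simp, Or.inl (Or.inl rfl)⟩

lemma wheel_connected : (wheelGraph n).Connected := by
  have h : ∀ x : Option (ZMod n), (wheelGraph n).Reachable none x := by
    intro x
    cases x with
    | none => exact SimpleGraph.Reachable.refl _
    | some a => exact (wheel_adj_none).reachable
  exact SimpleGraph.Connected.mk (fun x y => (h x).symm.trans (h y))

lemma wheel_dist_le_two (x y : Option (ZMod n)) : (wheelGraph n).dist x y ≤ 2 := by
  have h1 : ∀ z : Option (ZMod n), (wheelGraph n).dist none z ≤ 1 := by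
    intro z
    cases z with
    | none => rw [SimpleGraph.dist_self]; omega
    | some a => exact le_of_eq (SimpleGraph.dist_eq_one_iff_adj.mpr wheel_adj_none)
  have h2 : ∀ z : Option (ZMod n), (wheelGraph n).dist z none ≤ 1 := by
    intro z; rw [SimpleGraph.dist_comm]; exact h1 z
  calc (wheelGraph n).dist x y ≤ (wheelGraph n).dist x none + (wheelGraph n).dist none y :=
        wheel_connected.dist_triangle
    _ ≤ 1 + 1 := add_le_add (h2 x) (h1 y)
    _ = 2 := rfl

lemma nat_ne_zero_zmod (hn : 6 ≤ n) {k : ℕ} (h1 : 0 < k) (h2 : k < 6) :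
    ((k : ℕ) : ZMod n) ≠ 0 := by
  rw [Ne, ZMod.natCast_eq_zero_iff]
  intro hd
  have := Nat.le_of_dvd h1 hd
  omega

lemma cast_injOn_zmod (hn : 6 ≤ n) {a b : ℕ} (ha : a < 6) (hb : b < 6)
    (h : ((a : ℕ) : ZMod n) = ((b : ℕ) : ZMod n)) : a = b := by
  have := congrArg ZMod.val h
  rwa [ZMod.val_cast_of_lt (by omega), ZMod.val_cast_of_lt (by omega)] at this

lemma cast_ne_zmod (hn : 6 ≤ n) {a b : ℕ} (ha : a < 6) (hb : b < 6) (hab : a ≠ b) :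
    ((a : ℕ) : ZMod n) ≠ ((b : ℕ) : ZMod n) :=
  fun h => hab (cast_injOn_zmod hn ha hb h)

lemma not_adj_nat (hn : 6 ≤ n) {a b : ℕ} (ha : a < 5) (hb : b < 5)
    (h1 : b ≠ a + 1) (h2 : a ≠ b + 1) :
    ¬ (wheelGraph n).Adj (some ((a : ℕ) : ZMod n)) (some ((b : ℕ) : ZMod n)) := by
  rw [wheel_adj_some]
  rintro ⟨-, h | h⟩
  · have : ((b : ℕ) : ZMod n) = (((a + 1 : ℕ)) : ZMod n) := by push_cast; exact h
    exact h1 (cast_injOn_zmod hn (by omega) (by omega) this)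
  · have : ((a : ℕ) : ZMod n) = (((b + 1 : ℕ)) : ZMod n) := by push_cast; exact h
    exact h2 (cast_injOn_zmod hn (by omega) (by omega) this)

lemma wheel_no_triangle (hn : 6 ≤ n) {a b c : ZMod n}
    (h1 : (wheelGraph n).Adj (some a) (some b))
    (h2 : (wheelGraph n).Adj (some b) (some c))
    (h3 : (wheelGraph n).Adj (some a) (some c)) : False := by
  rw [wheel_adj_some] at h1 h2 h3
  obtain ⟨hab, h1⟩ := h1
  obtain ⟨hbc, h2⟩ := h2
  obtain ⟨hac, h3⟩ := h3
  have e1 : ((1 : ℕ) : ZMod n) ≠ 0 := nat_ne_zero_zmod hn one_pos (by omega)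
  have e3 : ((3 : ℕ) : ZMod n) ≠ 0 := nat_ne_zero_zmod hn (by omega) (by omega)
  push_cast at e1 e3
  rcases h1 with h1 | h1 <;> rcases h2 with h2 | h2 <;> rcases h3 with h3 | h3 <;>
    first
      | exact hac (by linear_combination h2 - h1)
      | exact hac (by linear_combination h1 - h2)
      | exact e1 (by linear_combination h3 - h1 - h2)
      | exact e3 (by linear_combination -h1 - h2 - h3)

lemma wheel_dist_two (hn : 6 ≤ n) {x y : Option (ZMod n)} (hxy : x ≠ y)
    (hna : ¬ (wheelGraph n).Adj x y) : (wheelGraph n).dist x y = 2 := by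
  have hle := wheel_dist_le_two x y
  have hpos := wheel_connected.pos_dist_of_ne hxy
  have hne1 : (wheelGraph n).dist x y ≠ 1 := by
    rw [Ne, SimpleGraph.dist_eq_one_iff_adj]; exact hna
  omega

end WheelAux

/-- For `n ≥ 6` every gp-set `S` of the wheel `W_n` lies on the
outer cycle, and the subgraph of the outer cycle induced by `S` contains no path
on three vertices. -/
theorem gpSet_wheel_structure (n : ℕ) (hn : 6 ≤ n)
    (S : Set (Option (ZMod n))) (hS : IsGPMaxSet (wheelGraph n) S) :
    none ∉ S ∧
    ∀ a b c : ZMod n, some a ∈ S → some b ∈ S → some c ∈ S → a ≠ c →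
      (wheelGraph n).Adj (some a) (some b) →
      (wheelGraph n).Adj (some b) (some c) → False := by
  haveI : NeZero n := ⟨by omega⟩
  obtain ⟨hgp, hcard⟩ := hS
  have part2 : ∀ a b c : ZMod n, some a ∈ S → some b ∈ S → some c ∈ S → a ≠ c →
      (wheelGraph n).Adj (some a) (some b) → (wheelGraph n).Adj (some b) (some c) → False := by
    intro a b c ha hb hc hac hab hbc
    have hnac : ¬ (wheelGraph n).Adj (some a) (some c) := fun h => wheel_no_triangle hn hab hbc h
    have hd2 : (wheelGraph n).dist (some a) (some c) = 2 :=
      wheel_dist_two hn (by simpa using hac) hnac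
    have d1 : (wheelGraph n).dist (some a) (some b) = 1 := SimpleGraph.dist_eq_one_iff_adj.mpr hab
    have d2 : (wheelGraph n).dist (some b) (some c) = 1 := SimpleGraph.dist_eq_one_iff_adj.mpr hbc
    exact hgp _ ha _ hb _ hc (by simpa using hab.ne) (by simpa using hbc.ne)
      (by simpa using hac) (by rw [hd2, d1, d2])
  refine ⟨?_, part2⟩
  intro hnone
  set T : Set (Option (ZMod n)) :=
    {some ((0 : ℕ) : ZMod n), some ((1 : ℕ) : ZMod n), some ((3 : ℕ) : ZMod n),
      some ((4 : ℕ) : ZMod n)} with hT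
  have key : ∀ x ∈ T, ∀ y ∈ T, ∀ z ∈ T, x ≠ z →
      (wheelGraph n).Adj x y → (wheelGraph n).Adj y z → False := by
    intro x hx y hy z hz hxz h1 h2
    simp only [hT, Set.mem_insert_iff, Set.mem_singleton_iff] at hx hy hz
    rcases hx with rfl | rfl | rfl | rfl <;> rcases hy with rfl | rfl | rfl | rfl <;>
      rcases hz with rfl | rfl | rfl | rfl <;>
      first
        | exact hxz rfl
        | exact not_adj_nat hn (by omega) (by omega) (by omega) (by omega) h1
        | exact not_adj_nat hn (by omega) (by omega) (by omega) (by omega) h2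
  have hTgp : IsGPSet (wheelGraph n) T := by
    intro x hx y hy z hz hxy hyz hxz heq
    have hle := wheel_dist_le_two (n := n) x z
    have p1 := (wheel_connected (n := n)).pos_dist_of_ne hxy
    have p2 := (wheel_connected (n := n)).pos_dist_of_ne hyz
    have d1 : (wheelGraph n).dist x y = 1 := by omega
    have d2 : (wheelGraph n).dist y z = 1 := by omega
    exact key x hx y hy z hz hxz (SimpleGraph.dist_eq_one_iff_adj.mp d1)
      (SimpleGraph.dist_eq_one_iff_adj.mp d2)
  have d01 := cast_ne_zmod hn (a := 0) (b := 1) (by omega) (by omega) (by omega)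
  have d03 := cast_ne_zmod hn (a := 0) (b := 3) (by omega) (by omega) (by omega)
  have d04 := cast_ne_zmod hn (a := 0) (b := 4) (by omega) (by omega) (by omega)
  have d13 := cast_ne_zmod hn (a := 1) (b := 3) (by omega) (by omega) (by omega)
  have d14 := cast_ne_zmod hn (a := 1) (b := 4) (by omega) (by omega) (by omega)
  have d34 := cast_ne_zmod hn (a := 3) (b := 4) (by omega) (by omega) (by omega)
  have hT4 : T.ncard = 4 := by
    push_cast at d01 d03 d04 d13 d14 d34
    rw [hT, Set.ncard_insert_of_notMem (by simp [d01, d03, d04]),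
      Set.ncard_insert_of_notMem (by simp [d13, d14]),
      Set.ncard_insert_of_notMem (by simp [d34]), Set.ncard_singleton]
  have hbdd : BddAbove {m | ∃ U : Set (Option (ZMod n)),
      IsGPSet (wheelGraph n) U ∧ U.ncard = m} := by
    refine ⟨Nat.card (Option (ZMod n)), ?_⟩
    rintro m ⟨U, -, rfl⟩
    simpa [Set.ncard_univ] using Set.ncard_le_ncard (Set.subset_univ U) Set.finite_univ
  have h4 : 4 ≤ gpNumber (wheelGraph n) := le_csSup hbdd ⟨T, hTgp, hT4⟩
  have hS4 : 4 ≤ S.ncard := hcard ▸ h4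
  have hdiff1 := Set.ncard_diff_singleton_add_one hnone (Set.toFinite S)
  obtain ⟨a, ha⟩ : (S \ {none}).Nonempty := Set.nonempty_of_ncard_ne_zero (by omega)
  have hdiff2 := Set.ncard_diff_singleton_add_one ha (Set.toFinite _)
  have hlt : 1 < ((S \ {none}) \ {a}).ncard := by omega
  obtain ⟨b, hb, c, hc, hbc⟩ := (Set.one_lt_ncard (Set.toFinite _)).mp hlt
  have adjA : ∀ u v : ZMod n, some u ∈ S → some v ∈ S → u ≠ v →
      (wheelGraph n).Adj (some u) (some v) := by
    intro u v hu hv huv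
    by_contra hna
    have hduv : (wheelGraph n).dist (some u) (some v) = 2 :=
      wheel_dist_two hn (by simpa using huv) hna
    apply hgp (some u) hu none hnone (some v) hv (by simp) (by simp) (by simpa using huv)
    rw [hduv, SimpleGraph.dist_eq_one_iff_adj.mpr wheel_adj_none.symm,
      SimpleGraph.dist_eq_one_iff_adj.mpr wheel_adj_none]
  have haS : a ∈ S := ha.1
  have hbS : b ∈ S := hb.1.1
  have hcS : c ∈ S := hc.1.1
  obtain _ | a' := a
  · exact ha.2 rfl
  obtain _ | b' := b
  · exact hb.1.2 rfl
  obtain _ | c' := c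
  · exact hc.1.2 rfl
  have hab' : a' ≠ b' := fun h => hb.2 (by simp [h])
  have hac' : a' ≠ c' := fun h => hc.2 (by simp [h])
  have hbc' : b' ≠ c' := fun h => hbc (by simp [h])
  exact wheel_no_triangle hn (adjA a' b' haS hbS hab') (adjA b' c' hbS hcS hbc')
    (adjA a' c' haS hcS hac')
end

section
/- For the cycle graph C_n: gp(C₃) = 3, gp(C₄) = 2, and gp(C_n) = 3 for every n ≥ 5. -/
open SimpleGraph

/-- The cycle graph `C_n` on the vertex set `ZMod n`. -/
def cycleGraphZ (n : ℕ) : SimpleGraph (ZMod n) :=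
  SimpleGraph.fromRel (fun a b => b = a + 1)

namespace GPAux

open SimpleGraph

variable {n : ℕ}

/-- The candidate distance function on the cycle `ZMod n`. -/
def cd (n : ℕ) [NeZero n] (a b : ZMod n) : ℕ := min (b - a).val (a - b).val

lemma adj_succ [NeZero n] (hn : 2 ≤ n) (a : ZMod n) : (cycleGraphZ n).Adj a (a + 1) := by
  refine (SimpleGraph.fromRel_adj _ _ _).mpr ⟨?_, Or.inl rfl⟩
  intro h
  have h1 : (1 : ZMod n).val = 1 := by
    rw [ZMod.val_one_eq_one_mod, Nat.mod_eq_of_lt (by omega)]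
  have : ((a + 1) - a) = (1 : ZMod n) := by ring
  have h2 : ((a + 1) - a).val = 0 := by rw [← h, sub_self, ZMod.val_zero]
  rw [this, h1] at h2
  omega

lemma exists_walk_to [NeZero n] (hn : 2 ≤ n) (a b : ZMod n) :
    ∃ p : (cycleGraphZ n).Walk a b, p.length = (b - a).val := by
  suffices h : ∀ k : ℕ, ∃ p : (cycleGraphZ n).Walk a (a + (k : ZMod n)), p.length = k by
    obtain ⟨p, hp⟩ := h (b - a).val
    have he : a + (((b - a).val : ℕ) : ZMod n) = b := by
      rw [ZMod.natCast_zmod_val]; ring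
    exact ⟨p.copy rfl he, by simpa using hp⟩
  intro k
  induction k with
  | zero => exact ⟨SimpleGraph.Walk.nil.copy rfl (by push_cast; ring), by simp⟩
  | succ k ih =>
    obtain ⟨p, hp⟩ := ih
    exact ⟨(p.concat (adj_succ hn _)).copy rfl (by push_cast; ring),
      by simp [SimpleGraph.Walk.length_concat, hp]⟩

lemma dist_le_val [NeZero n] (hn : 2 ≤ n) (a b : ZMod n) :
    (cycleGraphZ n).dist a b ≤ (b - a).val := by
  obtain ⟨p, hp⟩ := exists_walk_to hn a b
  exact hp ▸ SimpleGraph.dist_le p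

lemma val_min_add [NeZero n] (x y : ZMod n) :
    min (x + y).val (-(x + y)).val ≤ min x.val (-x).val + min y.val (-y).val := by
  have h0 : 0 < n := Nat.pos_of_ne_zero (NeZero.ne n)
  have hx := ZMod.val_lt x
  have hy := ZMod.val_lt y
  have hxy := ZMod.val_lt (x + y)
  have m2 : ∀ t : ℕ, t < n → (n - t) % n = 0 ∧ t = 0 ∨ (n - t) % n = n - t := by
    intro t ht
    rcases Nat.eq_zero_or_pos t with rfl | h
    · left; simp
    · right; exact Nat.mod_eq_of_lt (by omega)
  have h1 : (x + y).val = (x.val + y.val) % n := ZMod.val_add x y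
  have m1 : (x.val + y.val) % n = x.val + y.val ∨
      (x.val + y.val) % n + n = x.val + y.val := by
    rcases Nat.lt_or_ge (x.val + y.val) n with h | h
    · exact Or.inl (Nat.mod_eq_of_lt h)
    · right
      rw [Nat.mod_eq_sub_mod h, Nat.mod_eq_of_lt (by omega)]
      omega
  have h2 : (-(x + y)).val = (n - (x + y).val) % n := ZMod.neg_val' _
  have h3 : (-x).val = (n - x.val) % n := ZMod.neg_val' _
  have h4 : (-y).val = (n - y.val) % n := ZMod.neg_val' _
  have w1 := m2 x.val hx
  have w2 := m2 y.val hy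
  have w3 := m2 (x + y).val hxy
  omega

lemma cd_triangle [NeZero n] (a c b : ZMod n) : cd n a b ≤ cd n a c + cd n c b := by
  have h := val_min_add (c - a) (b - c)
  have e1 : (c - a) + (b - c) = b - a := by ring
  have e2 : -(b - a) = a - b := by ring
  have e3 : -(c - a) = a - c := by ring
  have e4 : -(b - c) = c - b := by ring
  rw [e1, e2, e3, e4] at h
  exact h

lemma cd_adj [NeZero n] {a b : ZMod n} (h : (cycleGraphZ n).Adj a b) : cd n a b ≤ 1 := by
  rw [cycleGraphZ, SimpleGraph.fromRel_adj] at h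
  have h1 : (1 : ZMod n).val ≤ 1 := by
    rw [ZMod.val_one_eq_one_mod]; exact Nat.mod_le 1 n
  obtain ⟨hne, h | h⟩ := h
  · have hb : b - a = 1 := by rw [h]; ring
    calc cd n a b ≤ (b - a).val := min_le_left _ _
    _ ≤ 1 := by rw [hb]; exact h1
  · have hb : a - b = 1 := by rw [h]; ring
    calc cd n a b ≤ (a - b).val := min_le_right _ _
    _ ≤ 1 := by rw [hb]; exact h1

lemma cd_le_length [NeZero n] {a b : ZMod n} (p : (cycleGraphZ n).Walk a b) :
    cd n a b ≤ p.length := by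
  induction p with
  | nil => simp [cd]
  | @cons u c b h q ih =>
    calc cd n u b ≤ cd n u c + cd n c b := cd_triangle u c b
    _ ≤ 1 + q.length := Nat.add_le_add (cd_adj h) ih
    _ = (SimpleGraph.Walk.cons h q).length := by simp [SimpleGraph.Walk.length_cons]; omega

lemma dist_eq_cd [NeZero n] (hn : 2 ≤ n) (a b : ZMod n) :
    (cycleGraphZ n).dist a b = cd n a b := by
  apply le_antisymm
  · refine le_min (dist_le_val hn a b) ?_
    rw [SimpleGraph.dist_comm]
    exact dist_le_val hn b a
  · have hr : (cycleGraphZ n).Reachable a b := ⟨(exists_walk_to hn a b).choose⟩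
    obtain ⟨p, hp⟩ := hr.exists_walk_length_eq_dist
    exact hp ▸ cd_le_length p



lemma ne_of_val_ne [NeZero n] {a b : ZMod n} (h : a.val ≠ b.val) : a ≠ b :=
  fun he => h (he ▸ rfl)

lemma sorted_helper [NeZero n] (b c d : ZMod n) (hb : 0 < b.val)
    (hbc : b.val < c.val) (hcd : c.val < d.val) :
    ∃ x y z : ZMod n, (x = 0 ∨ x = b ∨ x = c ∨ x = d) ∧ (y = 0 ∨ y = b ∨ y = c ∨ y = d) ∧
      (z = 0 ∨ z = b ∨ z = c ∨ z = d) ∧ x ≠ y ∧ y ≠ z ∧ x ≠ z ∧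
      cd n x z = cd n x y + cd n y z := by
  have hdn := ZMod.val_lt d
  have h0 : (0 : ZMod n).val = 0 := ZMod.val_zero
  have hnb : (0 - b).val = n - b.val := by
    rw [zero_sub, ZMod.neg_val']; exact Nat.mod_eq_of_lt (by have := ZMod.val_lt b; omega)
  have hnc : (0 - c).val = n - c.val := by
    rw [zero_sub, ZMod.neg_val']; exact Nat.mod_eq_of_lt (by omega)
  have hnd : (0 - d).val = n - d.val := by
    rw [zero_sub, ZMod.neg_val']; exact Nat.mod_eq_of_lt (by omega)
  have hcb : (c - b).val = c.val - b.val := ZMod.val_sub (le_of_lt hbc)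
  have hbcv : (b - c).val = n - (c.val - b.val) := by
    have e : b - c = -(c - b) := by ring
    rw [e, ZMod.neg_val', hcb]; exact Nat.mod_eq_of_lt (by omega)
  have hdc : (d - c).val = d.val - c.val := ZMod.val_sub (le_of_lt hcd)
  have hcdv : (c - d).val = n - (d.val - c.val) := by
    have e : c - d = -(d - c) := by ring
    rw [e, ZMod.neg_val', hdc]; exact Nat.mod_eq_of_lt (by omega)
  have hne0b : (0 : ZMod n) ≠ b := ne_of_val_ne (by omega)
  have hne0c : (0 : ZMod n) ≠ c := ne_of_val_ne (by omega)
  have hne0d : (0 : ZMod n) ≠ d := ne_of_val_ne (by omega)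
  have hnebc : b ≠ c := ne_of_val_ne (by omega)
  have hnecd : c ≠ d := ne_of_val_ne (by omega)
  rcases le_or_gt (2 * c.val) n with hq | hq
  · refine ⟨0, b, c, Or.inl rfl, Or.inr (Or.inl rfl), Or.inr (Or.inr (Or.inl rfl)),
      hne0b, hnebc, hne0c, ?_⟩
    simp only [cd, sub_zero]
    rw [hnb, hnc, hcb, hbcv]
    omega
  · refine ⟨c, d, 0, Or.inr (Or.inr (Or.inl rfl)), Or.inr (Or.inr (Or.inr rfl)), Or.inl rfl,
      hnecd, hne0d.symm, hne0c.symm, ?_⟩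
    simp only [cd, sub_zero]
    rw [hnc, hnd, hdc, hcdv]
    omega

lemma cd_add [NeZero n] (x y t : ZMod n) : cd n (x + t) (y + t) = cd n x y := by
  simp [cd, add_sub_add_right_eq_sub]




lemma four_point [NeZero n] (a b c d : ZMod n) (hab : a ≠ b) (hac : a ≠ c) (had : a ≠ d)
    (hbc : b ≠ c) (hbd : b ≠ d) (hcd : c ≠ d) :
    ∃ x y z : ZMod n, (x = a ∨ x = b ∨ x = c ∨ x = d) ∧ (y = a ∨ y = b ∨ y = c ∨ y = d) ∧
      (z = a ∨ z = b ∨ z = c ∨ z = d) ∧ x ≠ y ∧ y ≠ z ∧ x ≠ z ∧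
      cd n x z = cd n x y + cd n y z := by
  have key : ∀ u : ZMod n, a ≠ u → 0 < (u - a).val := fun u h =>
    ZMod.val_pos.mpr (sub_ne_zero.mpr (Ne.symm h))
  have inj : ∀ u v : ZMod n, u ≠ v → (u - a).val ≠ (v - a).val := fun u v h he =>
    h (sub_left_inj.mp (ZMod.val_injective n he))
  have hB0 := key b hab
  have hC0 := key c hac
  have hD0 := key d had
  have hBC := inj b c hbc
  have hBD := inj b d hbd
  have hCD := inj c d hcd
  have main : ∃ x y z : ZMod n, (x = 0 ∨ x = b - a ∨ x = c - a ∨ x = d - a) ∧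
      (y = 0 ∨ y = b - a ∨ y = c - a ∨ y = d - a) ∧
      (z = 0 ∨ z = b - a ∨ z = c - a ∨ z = d - a) ∧
      x ≠ y ∧ y ≠ z ∧ x ≠ z ∧ cd n x z = cd n x y + cd n y z := by
    rcases lt_trichotomy (b - a).val (c - a).val with h1 | h1 | h1
    · rcases lt_trichotomy (c - a).val (d - a).val with h2 | h2 | h2
      · exact sorted_helper _ _ _ hB0 h1 h2
      · exact absurd h2 hCD
      · rcases lt_trichotomy (b - a).val (d - a).val with h3 | h3 | h3
        · -- order B D C
          obtain ⟨x, y, z, m1, m2, m3, r⟩ := sorted_helper _ _ _ hB0 h3 h2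
          have f : ∀ {t : ZMod n}, (t = 0 ∨ t = b - a ∨ t = d - a ∨ t = c - a) →
              (t = 0 ∨ t = b - a ∨ t = c - a ∨ t = d - a) := fun h => by
            rcases h with h | h | h | h
            exacts [Or.inl h, Or.inr (Or.inl h), Or.inr (Or.inr (Or.inr h)),
              Or.inr (Or.inr (Or.inl h))]
          exact ⟨x, y, z, f m1, f m2, f m3, r⟩
        · exact absurd h3 hBD
        · -- order D B C
          obtain ⟨x, y, z, m1, m2, m3, r⟩ := sorted_helper _ _ _ hD0 h3 h1
          have f : ∀ {t : ZMod n}, (t = 0 ∨ t = d - a ∨ t = b - a ∨ t = c - a) →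
              (t = 0 ∨ t = b - a ∨ t = c - a ∨ t = d - a) := fun h => by
            rcases h with h | h | h | h
            exacts [Or.inl h, Or.inr (Or.inr (Or.inr h)), Or.inr (Or.inl h),
              Or.inr (Or.inr (Or.inl h))]
          exact ⟨x, y, z, f m1, f m2, f m3, r⟩
    · exact absurd h1 hBC
    · rcases lt_trichotomy (b - a).val (d - a).val with h2 | h2 | h2
      · -- order C B D
        obtain ⟨x, y, z, m1, m2, m3, r⟩ := sorted_helper _ _ _ hC0 h1 h2
        have f : ∀ {t : ZMod n}, (t = 0 ∨ t = c - a ∨ t = b - a ∨ t = d - a) →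
            (t = 0 ∨ t = b - a ∨ t = c - a ∨ t = d - a) := fun h => by
          rcases h with h | h | h | h
          exacts [Or.inl h, Or.inr (Or.inr (Or.inl h)), Or.inr (Or.inl h),
            Or.inr (Or.inr (Or.inr h))]
        exact ⟨x, y, z, f m1, f m2, f m3, r⟩
      · exact absurd h2 hBD
      · rcases lt_trichotomy (c - a).val (d - a).val with h3 | h3 | h3
        · -- order C D B
          obtain ⟨x, y, z, m1, m2, m3, r⟩ := sorted_helper _ _ _ hC0 h3 h2
          have f : ∀ {t : ZMod n}, (t = 0 ∨ t = c - a ∨ t = d - a ∨ t = b - a) →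
              (t = 0 ∨ t = b - a ∨ t = c - a ∨ t = d - a) := fun h => by
            rcases h with h | h | h | h
            exacts [Or.inl h, Or.inr (Or.inr (Or.inl h)), Or.inr (Or.inr (Or.inr h)),
              Or.inr (Or.inl h)]
          exact ⟨x, y, z, f m1, f m2, f m3, r⟩
        · exact absurd h3 hCD
        · -- order D C B
          obtain ⟨x, y, z, m1, m2, m3, r⟩ := sorted_helper _ _ _ hD0 h3 h1
          have f : ∀ {t : ZMod n}, (t = 0 ∨ t = d - a ∨ t = c - a ∨ t = b - a) →
              (t = 0 ∨ t = b - a ∨ t = c - a ∨ t = d - a) := fun h => by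
            rcases h with h | h | h | h
            exacts [Or.inl h, Or.inr (Or.inr (Or.inr h)), Or.inr (Or.inr (Or.inl h)),
              Or.inr (Or.inl h)]
          exact ⟨x, y, z, f m1, f m2, f m3, r⟩
  obtain ⟨x, y, z, m1, m2, m3, hxy, hyz, hxz, heq⟩ := main
  have conv : ∀ w : ZMod n, (w = 0 ∨ w = b - a ∨ w = c - a ∨ w = d - a) →
      (w + a = a ∨ w + a = b ∨ w + a = c ∨ w + a = d) := by
    rintro w (rfl | rfl | rfl | rfl)
    · left; ring
    · right; left; ring
    · right; right; left; ring
    · right; right; right; ring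
  refine ⟨x + a, y + a, z + a, conv x m1, conv y m2, conv z m3,
    fun h => hxy (add_right_cancel h), fun h => hyz (add_right_cancel h),
    fun h => hxz (add_right_cancel h), ?_⟩
  rw [cd_add, cd_add, cd_add]
  exact heq

lemma gp3_lemma [NeZero n] (hn : 2 ≤ n) (b c : ZMod n) (h1 : 0 < b.val) (h2 : b.val < c.val)
    (h3 : 2 * b.val < n) (h4 : 2 * (c.val - b.val) < n) (h5 : 2 * (n - c.val) < n) :
    IsGPSet (cycleGraphZ n) {0, b, c} := by
  have hcl : c.val < n := ZMod.val_lt c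
  have hb' : (0 - b).val = n - b.val := by
    rw [zero_sub, ZMod.neg_val']; exact Nat.mod_eq_of_lt (by omega)
  have hc' : (0 - c).val = n - c.val := by
    rw [zero_sub, ZMod.neg_val']; exact Nat.mod_eq_of_lt (by omega)
  have hcb : (c - b).val = c.val - b.val := ZMod.val_sub (le_of_lt h2)
  have hbcv : (b - c).val = n - (c.val - b.val) := by
    have e : b - c = -(c - b) := by ring
    rw [e, ZMod.neg_val', hcb]; exact Nat.mod_eq_of_lt (by omega)
  intro x hx y hy z hz hxy hyz hxz
  simp only [Set.mem_insert_iff, Set.mem_singleton_iff] at hx hy hz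
  simp only [dist_eq_cd hn]
  rcases hx with rfl | rfl | rfl <;> rcases hy with rfl | rfl | rfl <;>
    rcases hz with rfl | rfl | rfl <;>
    first
      | exact absurd rfl hxy
      | exact absurd rfl hyz
      | exact absurd rfl hxz
      | (simp only [cd, sub_zero]; omega)

lemma gp_set_large (hn : 5 ≤ n) :
    ∃ S : Set (ZMod n), IsGPSet (cycleGraphZ n) S ∧ S.ncard = 3 := by
  haveI : NeZero n := ⟨by omega⟩
  rcases Nat.even_or_odd n with ⟨k, hk⟩ | ⟨k, hk⟩
  · -- n = k + k, k ≥ 3 : use 0, 2, k+1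
    have hk3 : 3 ≤ k := by omega
    have hv2 : ((2 : ℕ) : ZMod n).val = 2 := ZMod.val_cast_of_lt (by omega)
    have hvk : ((k + 1 : ℕ) : ZMod n).val = k + 1 := ZMod.val_cast_of_lt (by omega)
    refine ⟨{0, ((2 : ℕ) : ZMod n), ((k + 1 : ℕ) : ZMod n)}, 
      gp3_lemma (by omega) _ _ (by omega) (by omega) (by omega) (by omega) (by omega), ?_⟩
    have ne1 : (0 : ZMod n) ≠ ((2 : ℕ) : ZMod n) := ne_of_val_ne (by rw [ZMod.val_zero]; omega)
    have ne2 : (0 : ZMod n) ≠ ((k + 1 : ℕ) : ZMod n) := ne_of_val_ne (by rw [ZMod.val_zero]; omega)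
    have ne3 : ((2 : ℕ) : ZMod n) ≠ ((k + 1 : ℕ) : ZMod n) := ne_of_val_ne (by omega)
    rw [Set.ncard_insert_of_notMem (by
        simp only [Set.mem_insert_iff, Set.mem_singleton_iff]
        rintro (h | h)
        exacts [ne1 h, ne2 h]),
      Set.ncard_insert_of_notMem (by simp only [Set.mem_singleton_iff]; exact ne3),
      Set.ncard_singleton]
  · -- n = 2k + 1, k ≥ 2 : use 0, 1, k+1
    have hk2 : 2 ≤ k := by omega
    have hv1 : ((1 : ℕ) : ZMod n).val = 1 := ZMod.val_cast_of_lt (by omega)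
    have hvk : ((k + 1 : ℕ) : ZMod n).val = k + 1 := ZMod.val_cast_of_lt (by omega)
    refine ⟨{0, ((1 : ℕ) : ZMod n), ((k + 1 : ℕ) : ZMod n)},
      gp3_lemma (by omega) _ _ (by omega) (by omega) (by omega) (by omega) (by omega), ?_⟩
    have ne1 : (0 : ZMod n) ≠ ((1 : ℕ) : ZMod n) := ne_of_val_ne (by rw [ZMod.val_zero]; omega)
    have ne2 : (0 : ZMod n) ≠ ((k + 1 : ℕ) : ZMod n) := ne_of_val_ne (by rw [ZMod.val_zero]; omega)
    have ne3 : ((1 : ℕ) : ZMod n) ≠ ((k + 1 : ℕ) : ZMod n) := ne_of_val_ne (by omega)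
    rw [Set.ncard_insert_of_notMem (by
        simp only [Set.mem_insert_iff, Set.mem_singleton_iff]
        rintro (h | h)
        exacts [ne1 h, ne2 h]),
      Set.ncard_insert_of_notMem (by simp only [Set.mem_singleton_iff]; exact ne3),
      Set.ncard_singleton]


end GPAux

namespace GPAux
open SimpleGraph
variable {n : ℕ}

lemma gpNumber_eq {V : Type*} (G : SimpleGraph V) (k : ℕ)
    (hub : ∀ S : Set V, IsGPSet G S → S.ncard ≤ k)
    (S : Set V) (hS : IsGPSet G S) (hcard : S.ncard = k) : gpNumber G = k := by
  have hbdd : BddAbove {m | ∃ S : Set V, IsGPSet G S ∧ S.ncard = m} :=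
    ⟨k, fun m ⟨T, h1, h2⟩ => h2 ▸ hub T h1⟩
  apply le_antisymm
  · exact csSup_le ⟨k, S, hS, hcard⟩ (fun m ⟨T, h1, h2⟩ => h2 ▸ hub T h1)
  · exact le_csSup hbdd ⟨S, hS, hcard⟩

lemma extract3 {V : Type*} [Finite V] {S : Set V} (h : 3 ≤ S.ncard) :
    ∃ a b c, a ∈ S ∧ b ∈ S ∧ c ∈ S ∧ a ≠ b ∧ a ≠ c ∧ b ≠ c := by
  obtain ⟨a, ha⟩ := Set.nonempty_of_ncard_ne_zero (s := S) (by omega)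
  have e1 : (S \ {a}).ncard = S.ncard - 1 := Set.ncard_diff_singleton_of_mem ha
  obtain ⟨b, hb⟩ := Set.nonempty_of_ncard_ne_zero (s := S \ {a}) (by omega)
  have e2 : ((S \ {a}) \ {b}).ncard = (S \ {a}).ncard - 1 :=
    Set.ncard_diff_singleton_of_mem hb
  obtain ⟨c, hc⟩ := Set.nonempty_of_ncard_ne_zero (s := (S \ {a}) \ {b}) (by omega)
  exact ⟨a, b, c, ha, hb.1, hc.1.1, fun h => hb.2 h.symm, fun h => hc.1.2 h.symm,
    fun h => hc.2 h.symm⟩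

lemma extract4 {V : Type*} [Finite V] {S : Set V} (h : 4 ≤ S.ncard) :
    ∃ a b c d, a ∈ S ∧ b ∈ S ∧ c ∈ S ∧ d ∈ S ∧
      a ≠ b ∧ a ≠ c ∧ a ≠ d ∧ b ≠ c ∧ b ≠ d ∧ c ≠ d := by
  obtain ⟨a, ha⟩ := Set.nonempty_of_ncard_ne_zero (s := S) (by omega)
  have e1 : (S \ {a}).ncard = S.ncard - 1 := Set.ncard_diff_singleton_of_mem ha
  obtain ⟨b, hb⟩ := Set.nonempty_of_ncard_ne_zero (s := S \ {a}) (by omega)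
  have e2 : ((S \ {a}) \ {b}).ncard = (S \ {a}).ncard - 1 :=
    Set.ncard_diff_singleton_of_mem hb
  obtain ⟨c, hc⟩ := Set.nonempty_of_ncard_ne_zero (s := (S \ {a}) \ {b}) (by omega)
  have e3 : (((S \ {a}) \ {b}) \ {c}).ncard = ((S \ {a}) \ {b}).ncard - 1 :=
    Set.ncard_diff_singleton_of_mem hc
  obtain ⟨d, hd⟩ := Set.nonempty_of_ncard_ne_zero (s := ((S \ {a}) \ {b}) \ {c}) (by omega)
  exact ⟨a, b, c, d, ha, hb.1, hc.1.1, hd.1.1.1, fun h => hb.2 h.symm,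
    fun h => hc.1.2 h.symm, fun h => hd.1.1.2 h.symm, fun h => hc.2 h.symm,
    fun h => hd.1.2 h.symm, fun h => hd.2 h.symm⟩

lemma gp_c3 : gpNumber (cycleGraphZ 3) = 3 := by
  have key : ∀ x y z : ZMod 3, x ≠ y → y ≠ z → x ≠ z →
      cd 3 x z ≠ cd 3 x y + cd 3 y z := by decide
  refine gpNumber_eq _ 3 ?_ Set.univ ?_ ?_
  · intro S _
    calc S.ncard ≤ (Set.univ : Set (ZMod 3)).ncard :=
          Set.ncard_le_ncard (Set.subset_univ S) Set.finite_univ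
    _ = 3 := by rw [Set.ncard_univ, Nat.card_zmod]
  · intro x _ y _ z _ hxy hyz hxz
    rw [dist_eq_cd (by norm_num), dist_eq_cd (by norm_num), dist_eq_cd (by norm_num)]
    exact key x y z hxy hyz hxz
  · rw [Set.ncard_univ, Nat.card_zmod]

lemma gp_c4 : gpNumber (cycleGraphZ 4) = 2 := by
  have key : ∀ a b c : ZMod 4, a ≠ b → a ≠ c → b ≠ c →
      (cd 4 a c = cd 4 a b + cd 4 b c ∨ cd 4 a b = cd 4 a c + cd 4 c b ∨
        cd 4 b c = cd 4 b a + cd 4 a c) := by decide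
  refine gpNumber_eq _ 2 ?_ {0, 1} ?_ ?_
  · intro S hS
    by_contra hcon
    obtain ⟨a, b, c, ha, hb, hc, hab, hac, hbc⟩ := extract3 (S := S) (by omega)
    have h2 : (2 : ℕ) ≤ 4 := by norm_num
    rcases key a b c hab hac hbc with h | h | h
    · exact hS a ha b hb c hc hab hbc hac
        (by rw [dist_eq_cd h2, dist_eq_cd h2, dist_eq_cd h2]; exact h)
    · exact hS a ha c hc b hb hac hbc.symm hab
        (by rw [dist_eq_cd h2, dist_eq_cd h2, dist_eq_cd h2]; exact h)
    · exact hS b hb a ha c hc hab.symm hac hbc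
        (by rw [dist_eq_cd h2, dist_eq_cd h2, dist_eq_cd h2]; exact h)
  · intro x hx y hy z hz hxy hyz hxz
    exfalso
    simp only [Set.mem_insert_iff, Set.mem_singleton_iff] at hx hy hz
    rcases hx with rfl | rfl <;> rcases hy with rfl | rfl <;> rcases hz with rfl | rfl <;>
      first
        | exact hxy rfl
        | exact hyz rfl
        | exact hxz rfl
  · exact Set.ncard_pair (by decide)

lemma gp_cn (hn : 5 ≤ n) : gpNumber (cycleGraphZ n) = 3 := by
  haveI : NeZero n := ⟨by omega⟩
  have h2 : (2 : ℕ) ≤ n := by omega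
  obtain ⟨S, hS, hcard⟩ := gp_set_large hn
  refine gpNumber_eq _ 3 ?_ S hS hcard
  intro T hT
  by_contra hcon
  obtain ⟨a, b, c, d, ha, hb, hc, hd, hab, hac, had, hbc, hbd, hcd⟩ :=
    extract4 (S := T) (by omega)
  obtain ⟨x, y, z, m1, m2, m3, hxy, hyz, hxz, heq⟩ :=
    four_point a b c d hab hac had hbc hbd hcd
  have hxT : x ∈ T := by rcases m1 with rfl | rfl | rfl | rfl <;> assumption
  have hyT : y ∈ T := by rcases m2 with rfl | rfl | rfl | rfl <;> assumption
  have hzT : z ∈ T := by rcases m3 with rfl | rfl | rfl | rfl <;> assumption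
  exact hT x hxT y hyT z hzT hxy hyz hxz
    (by rw [dist_eq_cd h2, dist_eq_cd h2, dist_eq_cd h2]; exact heq)

end GPAux

/-- `gp(C₃) = 3`, `gp(C₄) = 2`, and `gp(C_n) = 3` for `n ≥ 5`. -/
theorem gp_cycle :
    gpNumber (cycleGraphZ 3) = 3 ∧ gpNumber (cycleGraphZ 4) = 2 ∧
    ∀ n : ℕ, 5 ≤ n → gpNumber (cycleGraphZ n) = 3 :=
  ⟨GPAux.gp_c3, GPAux.gp_c4, fun _ hn => GPAux.gp_cn hn⟩
end
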